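/- arXiv:1106.3905 — 3 statements merged into one kernel-verified Lean document; each statement's English description precedes it below -/
import Mathlib

section
/- Let Λ be a non-trivial chain transitive set of a C¹ vector field X containing a hyperbolic singularity σ. Then Λ intersects both W^s(σ)\{σ} and W^u(σ)\{σ}. -/
open Set Metric Filter Module

set_option synthInstance.maxHeartbeats 1000000
set_option maxHeartbeats 1000000

variable {V : Type*} [NormedAddCommGroup V] [NormedSpace ℝ V]

/-- Two orbits of a flow of a vector field that is Lipschitz on a region containing an
invariant set diverge at most exponentially. -/
lemma flow_gron {X : V → V} {φ : ℝ → V → V} {B : Set V} {K : NNReal}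
    (hK : LipschitzOnWith K X B)
    (h0 : ∀ x, φ 0 x = x)
    (hder : ∀ x t, HasDerivAt (fun s => φ s x) (X (φ t x)) t)
    {Λ : Set V} (hΛB : Λ ⊆ B) (hinv : ∀ x ∈ Λ, ∀ t : ℝ, φ t x ∈ Λ)
    {x y : V} (hx : x ∈ Λ) (hy : y ∈ Λ) {t : ℝ} (ht : 0 ≤ t) :
    dist (φ t x) (φ t y) ≤ dist x y * Real.exp (K * t) := by
  have hcx : Continuous fun s => φ s x :=
    continuous_iff_continuousAt.2 fun u => (hder x u).continuousAt
  have hcy : Continuous fun s => φ s y :=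
    continuous_iff_continuousAt.2 fun u => (hder y u).continuousAt
  have h := dist_le_of_trajectories_ODE_of_mem (v := fun _ => X) (s := fun _ => B)
    (K := K) (a := 0) (b := t) (δ := dist x y)
    (fun _ _ => hK) hcx.continuousOn (fun u _ => (hder x u).hasDerivWithinAt)
    (fun u _ => hΛB (hinv x hx u)) hcy.continuousOn
    (fun u _ => (hder y u).hasDerivWithinAt)
    (fun u _ => hΛB (hinv y hy u)) (le_of_eq (by rw [h0, h0])) t (right_mem_Icc.2 ht)
  simpa using h

/-- Near a zero `σ` of a differentiable vector field, `‖X w‖` is controlled linearly. -/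
lemma littleO_ball {X : V → V} {σ : V} (hd : DifferentiableAt ℝ X σ) (hσ : X σ = 0)
    {c : ℝ} (hc : 0 < c) :
    ∃ δ > 0, ∀ w : V, ‖w - σ‖ < δ → ‖X w - (fderiv ℝ X σ) (w - σ)‖ ≤ c * ‖w - σ‖ := by
  have h := Asymptotics.isLittleO_iff.1 hd.hasFDerivAt.isLittleO hc
  rw [Metric.eventually_nhds_iff] at h
  obtain ⟨δ, hδ, hh⟩ := h
  refine ⟨δ, hδ, fun w hw => ?_⟩
  have := hh (y := w) (by rwa [dist_eq_norm])
  simpa [hσ] using this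

lemma littleO_ball' {X : V → V} {σ : V} (hd : DifferentiableAt ℝ X σ) (hσ : X σ = 0) :
    ∃ δ > 0, ∀ w : V, ‖w - σ‖ < δ → ‖X w‖ ≤ (‖fderiv ℝ X σ‖ + 1) * ‖w - σ‖ := by
  obtain ⟨δ, hδ, hb⟩ := littleO_ball hd hσ one_pos
  refine ⟨δ, hδ, fun w hw => ?_⟩
  calc ‖X w‖ = ‖X w - (fderiv ℝ X σ) (w - σ) + (fderiv ℝ X σ) (w - σ)‖ := by
        congr 1; abel
    _ ≤ ‖X w - (fderiv ℝ X σ) (w - σ)‖ + ‖(fderiv ℝ X σ) (w - σ)‖ := norm_add_le _ _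
    _ ≤ 1 * ‖w - σ‖ + ‖fderiv ℝ X σ‖ * ‖w - σ‖ :=
        add_le_add (hb w hw) ((fderiv ℝ X σ).le_opNorm _)
    _ = (‖fderiv ℝ X σ‖ + 1) * ‖w - σ‖ := by ring

/-- A priori estimate: an orbit starting close to a linearly-controlled zero stays close,
with exponential bound, on a given time interval. -/
lemma flow_apriori {X : V → V} {φ : ℝ → V → V}
    (hder : ∀ x t, HasDerivAt (fun s => φ s x) (X (φ t x)) t)
    (h0 : ∀ y, φ 0 y = y)
    {σ : V} {δ₀ N₁ : ℝ} (hδ₀ : 0 < δ₀) (hN₁ : 0 ≤ N₁)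
    (hXb : ∀ w : V, ‖w - σ‖ < δ₀ → ‖X w‖ ≤ N₁ * ‖w - σ‖)
    {x : V} {t : ℝ} (ht : 0 ≤ t) (hx : ‖x - σ‖ * Real.exp (N₁ * t) < δ₀) :
    ∀ s ∈ Icc 0 t, ‖φ s x - σ‖ ≤ ‖x - σ‖ * Real.exp (N₁ * s) := by
  set f : ℝ → V := fun s => φ s x with hf
  have hcf : Continuous f := continuous_iff_continuousAt.2 fun u => (hder x u).continuousAt
  have hfc : Continuous fun s => ‖f s - σ‖ := (hcf.sub continuous_const).norm
  have hgr : ∀ τ, τ ∈ Icc 0 t → (∀ u ∈ Ico 0 τ, ‖f u - σ‖ < δ₀) →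
      ‖f τ - σ‖ ≤ ‖x - σ‖ * Real.exp (N₁ * τ) := by
    intro τ hτ hsmall
    have h1 : ∀ u ∈ Ico 0 τ, HasDerivWithinAt (fun s => f s - σ) (X (f u)) (Ici u) u :=
      fun u _ => ((hder x u).sub_const σ).hasDerivWithinAt
    have h2 : ∀ u ∈ Ico 0 τ, ‖X (f u)‖ ≤ N₁ * ‖f u - σ‖ + 0 := fun u hu => by
      rw [add_zero]; exact hXb _ (hsmall u hu)
    have h3 := norm_le_gronwallBound_of_norm_deriv_right_le (δ := ‖x - σ‖)
      ((hcf.sub continuous_const).continuousOn) h1 (le_of_eq (by simp [hf, h0]))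
      h2 τ (right_mem_Icc.2 hτ.1)
    rwa [gronwallBound_ε0, sub_zero] at h3
  have key : ∀ s ∈ Icc 0 t, ‖f s - σ‖ < δ₀ := by
    by_contra hcon
    push_neg at hcon
    obtain ⟨s₀, hs₀, hs₀'⟩ := hcon
    set Bad := {s | s ∈ Icc 0 t ∧ δ₀ ≤ ‖f s - σ‖} with hBadDef
    have hne : Bad.Nonempty := ⟨s₀, hs₀, hs₀'⟩
    have hcl : IsClosed Bad := by
      have : Bad = Icc 0 t ∩ {s | δ₀ ≤ ‖f s - σ‖} := rfl
      rw [this]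
      exact isClosed_Icc.inter (isClosed_le continuous_const hfc)
    have hbb : BddBelow Bad := ⟨0, fun s hs => hs.1.1⟩
    set τ := sInf Bad with hτdef
    have hτ : τ ∈ Bad := hcl.csInf_mem hne hbb
    have hless : ∀ u ∈ Ico 0 τ, ‖f u - σ‖ < δ₀ := by
      intro u hu
      by_contra hcc
      push_neg at hcc
      have hu' : u ∈ Bad := ⟨⟨hu.1, le_trans (le_of_lt hu.2) hτ.1.2⟩, hcc⟩
      exact absurd (csInf_le hbb hu') (not_le.2 hu.2)
    have h4 := hgr τ hτ.1 hless
    have h5 : ‖x - σ‖ * Real.exp (N₁ * τ) ≤ ‖x - σ‖ * Real.exp (N₁ * t) := by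
      gcongr
      exact hτ.1.2
    exact absurd (lt_of_le_of_lt (le_trans h4 h5) hx) (not_lt.2 hτ.2)
  intro s hs
  exact hgr s hs fun u hu => key u ⟨hu.1, le_trans (le_of_lt hu.2) hs.2⟩

/-- The flow fixes a differentiable zero of the field (for nonnegative times). -/
lemma flow_fix {X : V → V} {φ : ℝ → V → V}
    (hder : ∀ x t, HasDerivAt (fun s => φ s x) (X (φ t x)) t)
    (h0 : ∀ y, φ 0 y = y)
    {σ : V} (hd : DifferentiableAt ℝ X σ) (hσ : X σ = 0) {t : ℝ} (ht : 0 ≤ t) :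
    φ t σ = σ := by
  obtain ⟨δ₀, hδ₀, hXb⟩ := littleO_ball' hd hσ
  have h := flow_apriori hder h0 hδ₀ (by positivity) hXb ht
    (x := σ) (by simpa using hδ₀) t (right_mem_Icc.2 ht)
  have : ‖φ t σ - σ‖ ≤ 0 := by simpa using h
  rw [← sub_eq_zero]
  exact norm_le_zero_iff.1 this


section Part2
variable [FiniteDimensional ℝ V]

lemma gronwallBound_le' {K ε x : ℝ} (hK : 1 ≤ K) (hε : 0 ≤ ε) (hx : 0 ≤ x) :
    gronwallBound 0 K ε x ≤ ε * Real.exp (K * x) := by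
  rw [gronwallBound_of_K_ne_0 (by positivity)]
  have h3 : (1:ℝ) ≤ Real.exp (K * x) := Real.one_le_exp (by positivity)
  have h2 : ε / K ≤ ε := by
    rw [div_le_iff₀ (by positivity)]
    nlinarith
  have h4 : (0:ℝ) ≤ ε / K := by positivity
  nlinarith [mul_le_mul_of_nonneg_right h2 (by linarith : (0:ℝ) ≤ Real.exp (K * x) - 1)]

/-- Derivative of the time-`t` map of a flow at a fixed point: it is the exponential of the
linearization, for `t ≥ 0`. -/
lemma flow_hasFDerivAt_fix {X : V → V} {φ : ℝ → V → V}
    (hX : ContDiff ℝ 1 X)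
    (h0 : ∀ y, φ 0 y = y)
    (hder : ∀ x t, HasDerivAt (fun s => φ s x) (X (φ t x)) t)
    {σ : V} (hσ : X σ = 0) {t : ℝ} (ht : 0 ≤ t) :
    HasFDerivAt (φ t) (NormedSpace.exp (t • (fderiv ℝ X σ))) σ := by
  classical
  set A := fderiv ℝ X σ with hA
  have hdiff : DifferentiableAt ℝ X σ := (hX.differentiable one_ne_zero) σ
  set N₁ : ℝ := ‖A‖ + 1 with hN₁def
  have hN₁ : 1 ≤ N₁ := le_add_of_nonneg_left (norm_nonneg _)
  have hN₁0 : 0 ≤ N₁ := le_trans zero_le_one hN₁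
  obtain ⟨δ₀, hδ₀, hXb'⟩ := littleO_ball' hdiff hσ
  have hXb : ∀ w : V, ‖w - σ‖ < δ₀ → ‖X w‖ ≤ N₁ * ‖w - σ‖ := hXb'
  have hfix : φ t σ = σ := flow_fix hder h0 hdiff hσ ht
  have hexpder : ∀ (v : V) (u : ℝ),
      HasDerivAt (fun s : ℝ => (NormedSpace.exp (s • A)) v)
        ((NormedSpace.exp (u • A) * A) v) u := by
    intro v u
    have h1 := hasDerivAt_exp_smul_const (𝕂 := ℝ) A u
    have h2 := h1.clm_apply (hasDerivAt_const u v)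
    simpa using h2
  refine hasFDerivAt_iff_isLittleO.2 ?_
  rw [Asymptotics.isLittleO_iff]
  intro c hc
  set c' : ℝ := c * Real.exp (-(2 * N₁ * t)) with hc'def
  have hc' : 0 < c' := by positivity
  obtain ⟨δ₁', hδ₁', hb₁⟩ := littleO_ball hdiff hσ hc'
  set δ₁ : ℝ := min δ₁' δ₀ with hδ₁def
  have hδ₁ : 0 < δ₁ := lt_min hδ₁' hδ₀
  rw [Metric.eventually_nhds_iff]
  refine ⟨δ₁ * Real.exp (-(N₁ * t)), by positivity, fun x hx => ?_⟩
  rw [dist_eq_norm] at hx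
  have hxn : ‖x - σ‖ * Real.exp (N₁ * t) < δ₁ := by
    have h1 := mul_lt_mul_of_pos_right hx (Real.exp_pos (N₁ * t))
    rwa [mul_assoc, ← Real.exp_add, neg_add_cancel, Real.exp_zero, mul_one] at h1
  have horb : ∀ s ∈ Icc 0 t, ‖φ s x - σ‖ ≤ ‖x - σ‖ * Real.exp (N₁ * s) :=
    flow_apriori hder h0 hδ₀ hN₁0 hXb ht (lt_of_lt_of_le hxn (min_le_right _ _))
  have horb' : ∀ s ∈ Icc 0 t, ‖φ s x - σ‖ < δ₁' := by
    intro s hs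
    have h1 : ‖x - σ‖ * Real.exp (N₁ * s) ≤ ‖x - σ‖ * Real.exp (N₁ * t) := by
      gcongr
      exact hs.2
    exact lt_of_le_of_lt (le_trans (horb s hs) h1) (lt_of_lt_of_le hxn (min_le_left _ _))
  set z : ℝ → V := fun s => φ s x - σ - (NormedSpace.exp (s • A)) (x - σ) with hzdef
  have hzc : Continuous z := by
    have hcf : Continuous fun s => φ s x :=
      continuous_iff_continuousAt.2 fun u => (hder x u).continuousAt
    have hce : Continuous fun s : ℝ => (NormedSpace.exp (s • A)) (x - σ) :=
      continuous_iff_continuousAt.2 fun u => (hexpder (x - σ) u).continuousAt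
    exact (hcf.sub continuous_const).sub hce
  have hzder : ∀ u ∈ Ico 0 t,
      HasDerivWithinAt z (A (z u) + (X (φ u x) - A (φ u x - σ))) (Ici u) u := by
    intro u _
    have h3 : HasDerivAt z (X (φ u x) - (NormedSpace.exp (u • A) * A) (x - σ)) u :=
      ((hder x u).sub_const σ).sub (hexpder (x - σ) u)
    have hcomm : NormedSpace.exp (u • A) * A = A * NormedSpace.exp (u • A) :=
      (((Commute.refl A).smul_left u).exp_left).eq
    have heq : X (φ u x) - (NormedSpace.exp (u • A) * A) (x - σ)
        = A (z u) + (X (φ u x) - A (φ u x - σ)) := by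
      rw [hcomm]
      simp only [hzdef, ContinuousLinearMap.mul_apply, map_sub]
      abel
    rw [heq] at h3
    exact h3.hasDerivWithinAt
  have hz0 : ‖z 0‖ ≤ 0 := by
    simp [hzdef, h0, NormedSpace.exp_zero]
  set ε : ℝ := c' * (‖x - σ‖ * Real.exp (N₁ * t)) with hεdef
  have hbd : ∀ u ∈ Ico 0 t, ‖A (z u) + (X (φ u x) - A (φ u x - σ))‖ ≤ N₁ * ‖z u‖ + ε := by
    intro u hu
    have huI : u ∈ Icc 0 t := Ico_subset_Icc_self hu
    have h5 : ‖X (φ u x) - A (φ u x - σ)‖ ≤ c' * ‖φ u x - σ‖ := hb₁ _ (horb' u huI)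
    have h6 : ‖φ u x - σ‖ ≤ ‖x - σ‖ * Real.exp (N₁ * t) := by
      refine le_trans (horb u huI) ?_
      gcongr
      exact huI.2
    calc ‖A (z u) + (X (φ u x) - A (φ u x - σ))‖
        ≤ ‖A (z u)‖ + ‖X (φ u x) - A (φ u x - σ)‖ := norm_add_le _ _
      _ ≤ ‖A‖ * ‖z u‖ + c' * ‖φ u x - σ‖ := add_le_add (A.le_opNorm _) h5
      _ ≤ N₁ * ‖z u‖ + c' * (‖x - σ‖ * Real.exp (N₁ * t)) := by
          refine add_le_add ?_ ?_
          · gcongr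
            exact le_add_of_nonneg_right zero_le_one
          · gcongr
      _ = N₁ * ‖z u‖ + ε := rfl
  have hgron := norm_le_gronwallBound_of_norm_deriv_right_le (δ := 0) (K := N₁) (ε := ε)
    hzc.continuousOn hzder hz0 hbd t (right_mem_Icc.2 ht)
  rw [sub_zero] at hgron
  have hfin : ‖z t‖ ≤ c * ‖x - σ‖ := by
    refine le_trans (le_trans hgron (gronwallBound_le' hN₁ (by positivity) ht)) ?_
    rw [hεdef, hc'def]
    rw [show c * Real.exp (-(2 * N₁ * t)) * (‖x - σ‖ * Real.exp (N₁ * t)) * Real.exp (N₁ * t)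
        = c * ‖x - σ‖ * (Real.exp (-(2 * N₁ * t)) * Real.exp (N₁ * t) * Real.exp (N₁ * t)) by ring]
    rw [← Real.exp_add, ← Real.exp_add]
    simp [show -(2 * N₁ * t) + N₁ * t + N₁ * t = 0 by ring]
  calc ‖φ t x - φ t σ - (NormedSpace.exp (t • A)) (x - σ)‖
      = ‖z t‖ := by rw [hfix]
    _ ≤ c * ‖x - σ‖ := hfin

end Part2

section Part3
variable [FiniteDimensional ℝ V]

/-- Discrete hyperbolic trapping: if a map with hyperbolic derivative at a fixed point has an
orbit staying in a small ball around the fixed point, then that orbit converges to it. -/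
lemma discrete_stable {f : V → V} {L : V →L[ℝ] V} {p : V}
    {E F : Submodule ℝ V} (hcompl : IsCompl E F)
    (hfp : f p = p) (hdf : HasFDerivAt f L p)
    (hLE : ∀ v ∈ E, L v ∈ E) (hLF : ∀ v ∈ F, L v ∈ F)
    {θ : ℝ} (hθ0 : 0 < θ) (hθ : θ ≤ 1 / 8)
    (hcontr : ∀ v ∈ E, ‖L v‖ ≤ θ * ‖v‖) (hexpand : ∀ v ∈ F, ‖v‖ ≤ θ * ‖L v‖) :
    ∃ δ > 0, ∀ x : V, (∀ n : ℕ, ‖f^[n] x - p‖ ≤ δ) →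
      Tendsto (fun n => f^[n] x) atTop (nhds p) := by
  classical
  set P : V →ₗ[ℝ] V := E.subtype.comp (E.projectionOnto F hcompl) with hPdef
  set Q : V →ₗ[ℝ] V := F.subtype.comp (F.projectionOnto E hcompl.symm) with hQdef
  have hPQ : ∀ v : V, P v + Q v = v := fun v =>
    Submodule.projection_add_projection_eq_self hcompl v
  have hPmem : ∀ v : V, P v ∈ E := fun v => (E.projectionOnto F hcompl v).2
  have hQmem : ∀ v : V, Q v ∈ F := fun v => (F.projectionOnto E hcompl.symm v).2
  have hPleft : ∀ v ∈ E, P v = v := by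
    intro v hv
    show ((E.projectionOnto F hcompl) v : V) = v
    conv_lhs => rw [show v = ((⟨v, hv⟩ : E) : V) from rfl,
      Submodule.projectionOnto_apply_left hcompl]
  have hPright : ∀ v ∈ F, P v = 0 := by
    intro v hv
    show ((E.projectionOnto F hcompl) v : V) = 0
    rw [Submodule.projectionOnto_apply_of_mem_right hcompl hv]
    rfl
  have hQleft : ∀ v ∈ F, Q v = v := by
    intro v hv
    show ((F.projectionOnto E hcompl.symm) v : V) = v
    conv_lhs => rw [show v = ((⟨v, hv⟩ : F) : V) from rfl,
      Submodule.projectionOnto_apply_left hcompl.symm]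
  have hQright : ∀ v ∈ E, Q v = 0 := by
    intro v hv
    show ((F.projectionOnto E hcompl.symm) v : V) = 0
    rw [Submodule.projectionOnto_apply_of_mem_right hcompl.symm hv]
    rfl
  have hPL : ∀ v : V, P (L v) = L (P v) := by
    intro v
    have h1 : L v = L (P v) + L (Q v) := by rw [← map_add, hPQ]
    rw [h1, map_add, hPleft _ (hLE _ (hPmem v)), hPright _ (hLF _ (hQmem v)), add_zero]
  have hQL : ∀ v : V, Q (L v) = L (Q v) := by
    intro v
    have h1 : L v = L (P v) + L (Q v) := by rw [← map_add, hPQ]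
    rw [h1, map_add, hQright _ (hLE _ (hPmem v)), hQleft _ (hLF _ (hQmem v)), zero_add]
  set Pc : V →L[ℝ] V := LinearMap.toContinuousLinearMap P with hPcdef
  set Qc : V →L[ℝ] V := LinearMap.toContinuousLinearMap Q with hQcdef
  set c0 : ℝ := max ‖Pc‖ ‖Qc‖ + 1 with hc0def
  have hc0 : 1 ≤ c0 := le_add_of_nonneg_left (le_max_iff.2 (Or.inl (norm_nonneg _)))
  have hc0pos : 0 < c0 := lt_of_lt_of_le one_pos hc0
  have hPb : ∀ v : V, ‖P v‖ ≤ c0 * ‖v‖ := by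
    intro v
    have h1 : ‖Pc v‖ ≤ ‖Pc‖ * ‖v‖ := Pc.le_opNorm v
    have h2 : (Pc v : V) = P v := rfl
    rw [← h2]
    refine le_trans h1 ?_
    gcongr
    exact le_trans (le_max_left _ _) (by linarith)
  have hQb : ∀ v : V, ‖Q v‖ ≤ c0 * ‖v‖ := by
    intro v
    have h1 : ‖Qc v‖ ≤ ‖Qc‖ * ‖v‖ := Qc.le_opNorm v
    have h2 : (Qc v : V) = Q v := rfl
    rw [← h2]
    refine le_trans h1 ?_
    gcongr
    exact le_trans (le_max_right _ _) (by linarith)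
  set et : ℝ := 1 / (8 * c0) with hetdef
  have hetpos : 0 < et := by positivity
  have hec : et * c0 = 1 / 8 := by
    rw [hetdef]
    field_simp
  obtain ⟨δ', hδ', hh⟩ : ∃ δ' > 0, ∀ y : V, dist y p < δ' →
      ‖f y - f p - L (y - p)‖ ≤ et * ‖y - p‖ := by
    have h := Asymptotics.isLittleO_iff.1 hdf.isLittleO hetpos
    rw [Metric.eventually_nhds_iff] at h
    obtain ⟨δ'', h1, h2⟩ := h
    exact ⟨δ'', h1, fun y hy => h2 hy⟩
  refine ⟨δ' / 2, by positivity, fun x hx => ?_⟩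
  set w : ℕ → V := fun n => f^[n] x - p with hwdef
  have hwb : ∀ n, ‖w n‖ ≤ δ' / 2 := hx
  set r : ℕ → V := fun n => f (f^[n] x) - f p - L (w n) with hrdef
  have hrec : ∀ n, w (n + 1) = L (w n) + r n := by
    intro n
    rw [hrdef, hwdef]
    simp only [Function.iterate_succ_apply', hfp]
    abel
  have hr : ∀ n, ‖r n‖ ≤ et * ‖w n‖ := by
    intro n
    refine hh _ ?_
    rw [dist_eq_norm]
    exact lt_of_le_of_lt (hwb n) (by linarith)
  set a : ℕ → ℝ := fun n => ‖P (w n)‖ with hadef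
  set b : ℕ → ℝ := fun n => ‖Q (w n)‖ with hbdef
  have ha0 : ∀ n, 0 ≤ a n := fun n => norm_nonneg _
  have hb0 : ∀ n, 0 ≤ b n := fun n => norm_nonneg _
  have hwa : ∀ n, ‖w n‖ ≤ a n + b n := by
    intro n
    conv_lhs => rw [← hPQ (w n)]
    exact norm_add_le _ _
  have hstepa : ∀ n, a (n + 1) ≤ θ * a n + (1 / 8) * (a n + b n) := by
    intro n
    have h1 : P (w (n + 1)) = L (P (w n)) + P (r n) := by rw [hrec n, map_add, hPL]
    calc a (n + 1) = ‖L (P (w n)) + P (r n)‖ := by rw [hadef]; simp only; rw [h1]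
      _ ≤ ‖L (P (w n))‖ + ‖P (r n)‖ := norm_add_le _ _
      _ ≤ θ * a n + c0 * ‖r n‖ := add_le_add (hcontr _ (hPmem _)) (hPb _)
      _ ≤ θ * a n + c0 * (et * ‖w n‖) := by
          gcongr
          exact hr n
      _ ≤ θ * a n + c0 * (et * (a n + b n)) := by
          have := hwa n
          gcongr
      _ = θ * a n + (et * c0) * (a n + b n) := by ring
      _ = θ * a n + (1 / 8) * (a n + b n) := by rw [hec]
  have hstepb : ∀ n, (1 / θ) * b n - (1 / 8) * (a n + b n) ≤ b (n + 1) := by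
    intro n
    have h1 : Q (w (n + 1)) = L (Q (w n)) + Q (r n) := by rw [hrec n, map_add, hQL]
    have h2 : b n / θ ≤ ‖L (Q (w n))‖ := by
      have h3 := hexpand _ (hQmem (w n))
      rw [div_le_iff₀ hθ0]
      calc b n ≤ θ * ‖L (Q (w n))‖ := h3
        _ = ‖L (Q (w n))‖ * θ := mul_comm _ _
    have h4 : ‖L (Q (w n))‖ - ‖Q (r n)‖ ≤ ‖L (Q (w n)) + Q (r n)‖ := by
      have := norm_add_le (L (Q (w n)) + Q (r n)) (-(Q (r n)))
      simp only [add_neg_cancel_right, norm_neg] at this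
      linarith
    have h5 : ‖Q (r n)‖ ≤ (1 / 8) * (a n + b n) := by
      calc ‖Q (r n)‖ ≤ c0 * ‖r n‖ := hQb _
        _ ≤ c0 * (et * ‖w n‖) := by gcongr; exact hr n
        _ ≤ c0 * (et * (a n + b n)) := by have := hwa n; gcongr
        _ = (et * c0) * (a n + b n) := by ring
        _ = (1 / 8) * (a n + b n) := by rw [hec]
    have h6 : b (n + 1) = ‖L (Q (w n)) + Q (r n)‖ := by rw [hbdef]; simp only; rw [h1]
    rw [h6, div_eq_mul_one_div (b n) θ] at *
    have := h2
    nlinarith [h4, h5, this]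
  have h8 : (8 : ℝ) ≤ 1 / θ := by
    rw [le_div_iff₀ hθ0]
    linarith
  -- dominance of the contracting part
  have hba : ∀ n, b n ≤ a n := by
    by_contra hcon
    push_neg at hcon
    obtain ⟨n₀, hn₀⟩ := hcon
    have hgrow : ∀ k : ℕ, a (n₀ + k) ≤ b (n₀ + k) ∧ 2 ^ k * b n₀ ≤ b (n₀ + k) := by
      intro k
      induction k with
      | zero => exact ⟨le_of_lt hn₀, by simp⟩
      | succ k ih =>
        obtain ⟨hab, hgr⟩ := ih
        set m := n₀ + k with hmdef
        have hbm : 0 ≤ b m := hb0 m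
        have ham : 0 ≤ a m := ha0 m
        have hsum : a m + b m ≤ 2 * b m := by linarith
        have hb1 : 2 * b m ≤ b (m + 1) := by
          have h1 := hstepb m
          have h2 : (1 / θ) * b m ≥ 8 * b m := by nlinarith
          nlinarith
        have ha1 : a (m + 1) ≤ 2 * b m := by
          have h1 := hstepa m
          nlinarith
        have hk1 : n₀ + (k + 1) = m + 1 := by omega
        constructor
        · rw [hk1]; linarith
        · rw [hk1]
          have : (2:ℝ) ^ (k+1) * b n₀ = 2 * (2 ^ k * b n₀) := by ring
          rw [this]
          have hbn₀ : 0 ≤ b n₀ := hb0 n₀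
          nlinarith
    have hbpos : 0 < b n₀ := lt_of_le_of_lt (ha0 n₀) hn₀
    have hCb : ∀ k : ℕ, (2:ℝ) ^ k * b n₀ ≤ c0 * (δ' / 2) := by
      intro k
      refine le_trans (hgrow k).2 ?_
      calc b (n₀ + k) ≤ c0 * ‖w (n₀ + k)‖ := hQb _
        _ ≤ c0 * (δ' / 2) := by gcongr; exact hwb _
    obtain ⟨k, hk⟩ := pow_unbounded_of_one_lt (c0 * (δ' / 2) / b n₀) (by norm_num : (1:ℝ) < 2)
    have : (2:ℝ) ^ k * b n₀ > c0 * (δ' / 2) := by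
      rw [gt_iff_lt, ← div_lt_iff₀ hbpos]
      exact hk
    exact absurd (hCb k) (not_le.2 this)
  have hhalf : ∀ n, a (n + 1) ≤ (1 / 2) * a n := by
    intro n
    have h1 := hstepa n
    have h2 := hba n
    have h3 := ha0 n
    nlinarith
  have hgeo : ∀ n, a n ≤ (1 / 2) ^ n * a 0 := by
    intro n
    induction n with
    | zero => simp
    | succ n ih =>
      calc a (n + 1) ≤ (1 / 2) * a n := hhalf n
        _ ≤ (1 / 2) * ((1 / 2) ^ n * a 0) := by linarith
        _ = (1 / 2) ^ (n + 1) * a 0 := by ring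
  rw [tendsto_iff_dist_tendsto_zero]
  have hd : ∀ n, dist (f^[n] x) p = ‖w n‖ := fun n => by rw [dist_eq_norm]
  refine squeeze_zero (g := fun n => (2 * a 0) * (1 / 2) ^ n) (fun n => dist_nonneg)
    (fun n => ?_) ?_
  · rw [hd n]
    calc ‖w n‖ ≤ a n + b n := hwa n
      _ ≤ 2 * a n := by have := hba n; linarith
      _ ≤ 2 * ((1 / 2) ^ n * a 0) := by have := hgeo n; linarith
      _ = (2 * a 0) * (1 / 2) ^ n := by ring
  · have h1 : Tendsto (fun n : ℕ => (1 / 2 : ℝ) ^ n) atTop (nhds 0) :=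
      tendsto_pow_atTop_nhds_zero_of_lt_one (by norm_num) (by norm_num)
    have h2 := h1.const_mul (2 * a 0)
    simpa using h2

end Part3

section Part4

private lemma aux_le {ε T e d : ℝ} (hε : 0 < ε) (hT : 0 ≤ T) (he : 1 ≤ e) (hd : d ≤ ε) :
    d ≤ ε * (T + 1) * e := by
  have h1 : ε * 1 * 1 ≤ ε * (T + 1) * e := by
    gcongr
    linarith
  linarith

/-- One-ε version of the trapping construction: from an ε-chain ending at the fixed point σ,
produce a point of Λ at distance ≥ r from σ whose forward orbit stays (r + error)-close to σ. -/
lemma trap_eps {F : ℝ → V → V} {Λ : Set V} {σ : V} {K r : ℝ}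
    (hK : 0 ≤ K)
    (h0 : ∀ x, F 0 x = x) (hadd : ∀ s t x, F (s + t) x = F s (F t x))
    (hcont : ∀ x, Continuous fun s => F s x)
    (hinv : ∀ x ∈ Λ, ∀ t : ℝ, F t x ∈ Λ)
    (hfix : ∀ t, F t σ = σ)
    (hgron : ∀ x ∈ Λ, ∀ y ∈ Λ, ∀ t : ℝ, 0 ≤ t →
      dist (F t x) (F t y) ≤ dist x y * Real.exp (K * t))
    (hσ : σ ∈ Λ)
    (hr : 0 < r) {ε : ℝ} (hε : 0 < ε)
    {n : ℕ} {z : ℕ → V} {ts : ℕ → ℝ} (hn : 1 ≤ n)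
    (hzΛ : ∀ i ≤ n, z i ∈ Λ) (hz0 : r ≤ dist (z 0) σ) (hzn : z n = σ)
    (hts : ∀ i < n, 1 ≤ ts i ∧ dist (F (ts i) (z i)) (z (i + 1)) < ε) :
    ∃ x ∈ Λ, r ≤ dist x σ ∧ dist x σ ≤ r + ε ∧
      ∀ s : ℝ, 0 ≤ s → dist (F s x) σ ≤ r + ε * (s + 1) * Real.exp (K * s) := by
  classical
  -- the last chain segment containing a point at distance ≥ r from σ
  set A : Finset ℕ := (Finset.range n).filter
    (fun i => ∃ s ∈ Icc (0:ℝ) (ts i), r ≤ dist (F s (z i)) σ) with hAdef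
  have h0A : 0 ∈ A := by
    rw [hAdef, Finset.mem_filter]
    refine ⟨Finset.mem_range.2 hn, 0, ?_, ?_⟩
    · exact ⟨le_refl _, le_trans zero_le_one (hts 0 hn).1⟩
    · rw [h0]; exact hz0
  have hAne : A.Nonempty := ⟨0, h0A⟩
  set i₀ : ℕ := A.max' hAne with hi₀def
  have hi₀A : i₀ ∈ A := A.max'_mem hAne
  have hi₀n : i₀ < n := Finset.mem_range.1 (Finset.mem_filter.1 hi₀A).1
  obtain ⟨s₁, hs₁I, hs₁r⟩ := (Finset.mem_filter.1 hi₀A).2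
  have hmax : ∀ j, i₀ < j → j < n → ∀ s ∈ Icc (0:ℝ) (ts j), dist (F s (z j)) σ < r := by
    intro j hj hjn s hs
    by_contra hcc
    push_neg at hcc
    have hjA : j ∈ A := by
      rw [hAdef, Finset.mem_filter]
      exact ⟨Finset.mem_range.2 hjn, s, hs, hcc⟩
    exact absurd (A.le_max' j hjA) (not_le.2 hj)
  -- the last time within segment i₀ at distance ≥ r
  set S : Set ℝ := {s | s ∈ Icc (0:ℝ) (ts i₀) ∧ r ≤ dist (F s (z i₀)) σ} with hSdef
  have hdistc : Continuous fun s => dist (F s (z i₀)) σ := (hcont (z i₀)).dist continuous_const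
  have hSclosed : IsClosed S := by
    have : S = Icc (0:ℝ) (ts i₀) ∩ {s | r ≤ dist (F s (z i₀)) σ} := rfl
    rw [this]
    exact isClosed_Icc.inter (isClosed_le continuous_const hdistc)
  have hScomp : IsCompact S := isCompact_Icc.of_isClosed_subset hSclosed (fun s hs => hs.1)
  have hSne : S.Nonempty := ⟨s₁, hs₁I, hs₁r⟩
  set s₀ : ℝ := sSup S with hs₀def
  have hs₀S : s₀ ∈ S := hScomp.sSup_mem hSne
  have hs₀0 : 0 ≤ s₀ := hs₀S.1.1
  have hs₀ts : s₀ ≤ ts i₀ := hs₀S.1.2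
  have hlate : ∀ u, s₀ < u → u ≤ ts i₀ → dist (F u (z i₀)) σ < r := by
    intro u hu hu'
    by_contra hcc
    push_neg at hcc
    have huS : u ∈ S := ⟨⟨le_trans hs₀0 (le_of_lt hu), hu'⟩, hcc⟩
    exact absurd (le_csSup hScomp.bddAbove huS) (not_le.2 hu)
  set x : V := F s₀ (z i₀) with hxdef
  have hzi₀Λ : z i₀ ∈ Λ := hzΛ i₀ (le_of_lt hi₀n)
  have hxΛ : x ∈ Λ := hinv _ hzi₀Λ s₀
  have hxr : r ≤ dist x σ := hs₀S.2
  have htsi₀ : 1 ≤ ts i₀ := (hts i₀ hi₀n).1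
  have hhop : ∀ i, i < n → dist (F (ts i) (z i)) (z (i + 1)) < ε := fun i hi => (hts i hi).2
  -- distance of next chain points from σ
  have hznear : ∀ j, i₀ < j → j ≤ n → dist (z j) σ ≤ r := by
    intro j hj hjn
    rcases eq_or_lt_of_le hjn with h | h
    · rw [h, hzn]; simp [hr.le]
    · have := hmax j hj h 0 ⟨le_refl _, le_trans zero_le_one (hts j h).1⟩
      rw [h0] at this
      exact le_of_lt this
  have hxup : dist x σ ≤ r + ε := by
    rcases eq_or_lt_of_le hs₀ts with h | h
    · -- s₀ = ts i₀ : x is ε-close to z (i₀+1)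
      have h1 : dist x (z (i₀ + 1)) < ε := by
        rw [hxdef, h]
        exact hhop i₀ hi₀n
      have h2 : dist (z (i₀ + 1)) σ ≤ r := hznear (i₀ + 1) (Nat.lt_succ_self _) hi₀n
      calc dist x σ ≤ dist x (z (i₀ + 1)) + dist (z (i₀ + 1)) σ := dist_triangle _ _ _
        _ ≤ ε + r := add_le_add (le_of_lt h1) h2
        _ = r + ε := add_comm _ _
    · -- s₀ < ts i₀ : by continuity from the right, dist x σ ≤ r
      have h1 : Tendsto (fun u => dist (F u (z i₀)) σ) (nhdsWithin s₀ (Ioi s₀))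
          (nhds (dist x σ)) := (hdistc.tendsto s₀).mono_left nhdsWithin_le_nhds
      have h2 : ∀ᶠ u in nhdsWithin s₀ (Ioi s₀), dist (F u (z i₀)) σ ≤ r := by
        filter_upwards [Ioc_mem_nhdsGT_of_mem ⟨le_refl s₀, h⟩] with u hu
        exact le_of_lt (hlate u hu.1 hu.2)
      have := le_of_tendsto h1 h2
      linarith
  refine ⟨x, hxΛ, hxr, hxup, ?_⟩
  -- accumulated times
  set T : ℕ → ℝ := fun j => (ts i₀ - s₀) + ∑ i ∈ Finset.Ico (i₀ + 1) j, ts i with hTdef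
  have hT1 : T (i₀ + 1) = ts i₀ - s₀ := by
    rw [hTdef]
    simp
  have hTsucc : ∀ j, i₀ + 1 ≤ j → T (j + 1) = T j + ts j := by
    intro j hj
    rw [hTdef]
    simp only
    rw [Finset.sum_Ico_succ_top hj]
    ring
  have hT0 : ∀ j, i₀ + 1 ≤ j → j ≤ n → 0 ≤ T j := by
    intro j hj hjn
    show (0:ℝ) ≤ (ts i₀ - s₀) + ∑ i ∈ Finset.Ico (i₀ + 1) j, ts i
    have h1 : 0 ≤ ts i₀ - s₀ := by linarith
    have h2 : (0:ℝ) ≤ ∑ i ∈ Finset.Ico (i₀ + 1) j, ts i := by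
      refine Finset.sum_nonneg fun i hi => ?_
      have hi' := Finset.mem_Ico.1 hi
      exact le_trans zero_le_one (hts i (lt_of_lt_of_le hi'.2 hjn)).1
    linarith
  -- the key shadowing estimate along the chain
  have KEY : ∀ j, i₀ + 1 ≤ j → j ≤ n →
      dist (F (T j) x) (z j) ≤ ε * (T j + 1) * Real.exp (K * T j) := by
    intro j hj
    induction j, hj using Nat.le_induction with
    | base =>
      intro _
      have h1 : F (T (i₀ + 1)) x = F (ts i₀) (z i₀) := by
        rw [hT1, hxdef]
        have h := hadd (ts i₀ - s₀) s₀ (z i₀)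
        rw [show ts i₀ - s₀ + s₀ = ts i₀ by ring] at h
        exact h.symm
      rw [h1]
      have h2 := hhop i₀ hi₀n
      have h3 : 0 ≤ T (i₀ + 1) := hT0 _ (le_refl _) hi₀n
      have h4 : 1 ≤ Real.exp (K * T (i₀ + 1)) := Real.one_le_exp (by positivity)
      exact aux_le hε h3 h4 h2.le
    | succ j hj IH =>
      intro hj1n
      have hjn : j < n := hj1n
      have hIH := IH (le_of_lt hjn)
      have hTj0 : 0 ≤ T j := hT0 j hj (le_of_lt hjn)
      have htsj : 1 ≤ ts j := (hts j hjn).1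
      have h1 : F (T (j + 1)) x = F (ts j) (F (T j) x) := by
        have h := hadd (ts j) (T j) x
        rw [show ts j + T j = T (j + 1) by rw [hTsucc j hj]; ring] at h
        exact h
      have h2 : dist (F (ts j) (F (T j) x)) (F (ts j) (z j))
          ≤ dist (F (T j) x) (z j) * Real.exp (K * ts j) :=
        hgron _ (hinv _ hxΛ _) _ (hzΛ j (le_of_lt hjn)) _ (by linarith)
      have h3 := hhop j hjn
      have hTj1 : T (j + 1) = T j + ts j := hTsucc j hj
      have hde : Real.exp (K * T j) * Real.exp (K * ts j) = Real.exp (K * T (j + 1)) := by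
        rw [← Real.exp_add, hTj1]
        congr 1
        ring
      have h4 : 1 ≤ Real.exp (K * T (j + 1)) :=
        Real.one_le_exp (by nlinarith)
      have h5 : dist (F (T j) x) (z j) * Real.exp (K * ts j)
          ≤ ε * (T j + 1) * Real.exp (K * T (j + 1)) := by
        rw [← hde, ← mul_assoc]
        exact mul_le_mul_of_nonneg_right hIH (Real.exp_pos _).le
      calc dist (F (T (j + 1)) x) (z (j + 1))
          ≤ dist (F (ts j) (F (T j) x)) (F (ts j) (z j)) + dist (F (ts j) (z j)) (z (j + 1)) := by
            rw [h1]; exact dist_triangle _ _ _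
        _ ≤ ε * (T j + 1) * Real.exp (K * T (j + 1)) + ε := by
            refine add_le_add (le_trans h2 h5) (le_of_lt h3)
        _ ≤ ε * (T (j + 1) + 1) * Real.exp (K * T (j + 1)) := by
            have e1 : ε * 1 * 1 ≤ ε * ts j * Real.exp (K * T (j + 1)) := by
              gcongr
            have expand : ε * (T (j + 1) + 1) * Real.exp (K * T (j + 1))
                = ε * (T j + 1) * Real.exp (K * T (j + 1))
                  + ε * ts j * Real.exp (K * T (j + 1)) := by
              rw [hTj1]; ring
            linarith
  -- conclusion: the whole forward orbit of x stays close to σ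
  intro s hs
  by_cases hhead : s + s₀ ≤ ts i₀
  · -- still inside segment i₀
    have h1 : F s x = F (s + s₀) (z i₀) := by
      rw [hxdef]
      exact (hadd s s₀ (z i₀)).symm
    rcases eq_or_lt_of_le hs with h | h
    · -- s = 0
      have h2 : dist (F s x) σ ≤ r + ε := by
        rw [← h, h0]
        exact hxup
      have h3 : 1 ≤ Real.exp (K * s) := Real.one_le_exp (by positivity)
      have h4 : ε ≤ ε * (s + 1) * Real.exp (K * s) := aux_le hε (by rw [← h]) h3 (le_refl ε)
      linarith
    · have h2 : dist (F (s + s₀) (z i₀)) σ < r := hlate (s + s₀) (by linarith) hhead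
      have h3 : (0:ℝ) ≤ ε * (s + 1) * Real.exp (K * s) := by positivity
      rw [h1]
      linarith
  · -- beyond segment i₀ : find the last chain index with T j ≤ s
    push_neg at hhead
    have hTi₀s : T (i₀ + 1) ≤ s := by
      rw [hT1]
      linarith
    set J : Finset ℕ := (Finset.Icc (i₀ + 1) n).filter (fun j => T j ≤ s) with hJdef
    have hJne : J.Nonempty := by
      refine ⟨i₀ + 1, ?_⟩
      rw [hJdef, Finset.mem_filter, Finset.mem_Icc]
      exact ⟨⟨le_refl _, hi₀n⟩, hTi₀s⟩
    set j₀ : ℕ := J.max' hJne with hj₀def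
    have hj₀J : j₀ ∈ J := J.max'_mem hJne
    have hj₀mem := Finset.mem_Icc.1 (Finset.mem_filter.1 hj₀J).1
    have hj₀T : T j₀ ≤ s := (Finset.mem_filter.1 hj₀J).2
    have hj₀lo : i₀ + 1 ≤ j₀ := hj₀mem.1
    have hj₀hi : j₀ ≤ n := hj₀mem.2
    have hKEYj₀ := KEY j₀ hj₀lo hj₀hi
    have hexps : 1 ≤ Real.exp (K * s) := Real.one_le_exp (by positivity)
    have hTj₀0 : 0 ≤ T j₀ := hT0 j₀ hj₀lo hj₀hi
    have hgr2 : dist (F (s - T j₀) (F (T j₀) x)) (F (s - T j₀) (z j₀))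
        ≤ dist (F (T j₀) x) (z j₀) * Real.exp (K * (s - T j₀)) :=
      hgron _ (hinv _ hxΛ _) _ (hzΛ j₀ hj₀hi) _ (by linarith)
    have hFsx : F s x = F (s - T j₀) (F (T j₀) x) := by
      have h := hadd (s - T j₀) (T j₀) x
      rw [show s - T j₀ + T j₀ = s by ring] at h
      exact h
    have hcomb : dist (F (T j₀) x) (z j₀) * Real.exp (K * (s - T j₀))
        ≤ ε * (s + 1) * Real.exp (K * s) := by
      have h6 : Real.exp (K * T j₀) * Real.exp (K * (s - T j₀)) = Real.exp (K * s) := by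
        rw [← Real.exp_add]
        congr 1
        ring
      calc dist (F (T j₀) x) (z j₀) * Real.exp (K * (s - T j₀))
          ≤ (ε * (T j₀ + 1) * Real.exp (K * T j₀)) * Real.exp (K * (s - T j₀)) :=
            mul_le_mul_of_nonneg_right hKEYj₀ (Real.exp_pos _).le
        _ = ε * (T j₀ + 1) * Real.exp (K * s) := by
            rw [mul_assoc, mul_assoc, h6, ← mul_assoc]
        _ ≤ ε * (s + 1) * Real.exp (K * s) := by
            gcongr
    rcases eq_or_lt_of_le hj₀hi with hjn | hjn
    · -- j₀ = n : tail, compare with σ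
      have hzj₀ : z j₀ = σ := by rw [hjn]; exact hzn
      have h7 : dist (F (T j₀) x) σ ≤ ε * (T j₀ + 1) * Real.exp (K * T j₀) := by
        rw [← hzj₀]
        exact hKEYj₀
      have h8 : dist (F s x) σ ≤ dist (F (T j₀) x) σ * Real.exp (K * (s - T j₀)) := by
        have hg := hgron (F (T j₀) x) (hinv _ hxΛ _) σ hσ (s - T j₀) (by linarith)
        rw [hfix] at hg
        rw [hFsx]
        exact hg
      have h9 : dist (F (T j₀) x) σ * Real.exp (K * (s - T j₀))
          ≤ ε * (s + 1) * Real.exp (K * s) := by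
        have h6 : Real.exp (K * T j₀) * Real.exp (K * (s - T j₀)) = Real.exp (K * s) := by
          rw [← Real.exp_add]
          congr 1
          ring
        calc dist (F (T j₀) x) σ * Real.exp (K * (s - T j₀))
            ≤ (ε * (T j₀ + 1) * Real.exp (K * T j₀)) * Real.exp (K * (s - T j₀)) :=
              mul_le_mul_of_nonneg_right h7 (Real.exp_pos _).le
          _ = ε * (T j₀ + 1) * Real.exp (K * s) := by
              rw [mul_assoc, mul_assoc, h6, ← mul_assoc]
          _ ≤ ε * (s + 1) * Real.exp (K * s) := by
              gcongr
      have := le_trans h8 h9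
      linarith
    · -- j₀ < n : middle of a later segment
      have hnext : ¬ T (j₀ + 1) ≤ s := by
        intro hcc
        have : j₀ + 1 ∈ J := by
          rw [hJdef, Finset.mem_filter, Finset.mem_Icc]
          exact ⟨⟨le_trans hj₀lo (Nat.le_succ _), hjn⟩, hcc⟩
        have := J.le_max' _ this
        omega
      push_neg at hnext
      rw [hTsucc j₀ hj₀lo] at hnext
      have hu1 : 0 ≤ s - T j₀ := by linarith
      have hu2 : s - T j₀ ≤ ts j₀ := by linarith
      have hmid : dist (F (s - T j₀) (z j₀)) σ < r :=
        hmax j₀ (by omega) hjn (s - T j₀) ⟨hu1, hu2⟩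
      calc dist (F s x) σ
          ≤ dist (F (s - T j₀) (F (T j₀) x)) (F (s - T j₀) (z j₀))
            + dist (F (s - T j₀) (z j₀)) σ := by
            rw [hFsx]; exact dist_triangle _ _ _
        _ ≤ ε * (s + 1) * Real.exp (K * s) + r := by
            refine add_le_add (le_trans hgr2 hcomb) (le_of_lt hmid)
        _ = r + ε * (s + 1) * Real.exp (K * s) := add_comm _ _

/-- The full trapping lemma: a compact invariant set with ε-chains from a definite distance
down to the fixed point σ contains a point ≠ σ whose entire forward orbit stays r-close to σ. -/
lemma trap {F : ℝ → V → V} {Λ : Set V} {σ : V} {K r : ℝ}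
    (hK : 0 ≤ K)
    (h0 : ∀ x, F 0 x = x) (hadd : ∀ s t x, F (s + t) x = F s (F t x))
    (hcont : ∀ x, Continuous fun s => F s x)
    (hinv : ∀ x ∈ Λ, ∀ t : ℝ, F t x ∈ Λ)
    (hcomp : IsCompact Λ) (hσ : σ ∈ Λ) (hfix : ∀ t, F t σ = σ)
    (hgron : ∀ x ∈ Λ, ∀ y ∈ Λ, ∀ t : ℝ, 0 ≤ t →
      dist (F t x) (F t y) ≤ dist x y * Real.exp (K * t))
    (hr : 0 < r)
    (hchain : ∀ ε : ℝ, 0 < ε → ∃ (n : ℕ) (z : ℕ → V) (ts : ℕ → ℝ), 1 ≤ n ∧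
      (∀ i ≤ n, z i ∈ Λ) ∧ r ≤ dist (z 0) σ ∧ z n = σ ∧
      ∀ i < n, 1 ≤ ts i ∧ dist (F (ts i) (z i)) (z (i + 1)) < ε) :
    ∃ x ∈ Λ, r ≤ dist x σ ∧ ∀ s : ℝ, 0 ≤ s → dist (F s x) σ ≤ r := by
  have hsel : ∀ k : ℕ, ∃ x ∈ Λ, r ≤ dist x σ ∧ dist x σ ≤ r + 1 / (k + 1) ∧
      ∀ s : ℝ, 0 ≤ s → dist (F s x) σ ≤ r + (1 / (k + 1)) * (s + 1) * Real.exp (K * s) := by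
    intro k
    have hεk : (0:ℝ) < 1 / (k + 1) := by positivity
    obtain ⟨n, z, ts, hn, hzΛ, hz0, hzn, hts⟩ := hchain (1 / (k + 1)) hεk
    exact trap_eps hK h0 hadd hcont hinv hfix hgron hσ hr hεk hn hzΛ hz0 hzn hts
  choose u huΛ hur hub hutrap using hsel
  obtain ⟨x, hxΛ, ψ, hψ, hψtend⟩ := hcomp.tendsto_subseq huΛ
  refine ⟨x, hxΛ, ?_, ?_⟩
  · have h1 : Tendsto (fun k => dist (u (ψ k)) σ) atTop (nhds (dist x σ)) :=
      hψtend.dist tendsto_const_nhds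
    exact ge_of_tendsto h1 (Eventually.of_forall fun k => hur (ψ k))
  · intro s hs
    have h2 : Tendsto (fun k => dist (u (ψ k)) x) atTop (nhds 0) := by
      have := hψtend.dist (tendsto_const_nhds (x := x) (f := atTop))
      simpa using this
    have h3 : Tendsto (fun k : ℕ => (1:ℝ) / (ψ k + 1)) atTop (nhds 0) := by
      refine squeeze_zero (fun k => by positivity) (fun k => ?_)
        tendsto_one_div_add_atTop_nhds_zero_nat
      have hk : (k:ℝ) + 1 ≤ (ψ k : ℝ) + 1 := by
        have := hψ.le_apply (x := k)
        have : (k:ℝ) ≤ (ψ k : ℝ) := by exact_mod_cast this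
        linarith
      exact one_div_le_one_div_of_le (by positivity) hk
    have key : ∀ k, dist (F s x) σ ≤ dist (u (ψ k)) x * Real.exp (K * s)
        + (r + (1 / (ψ k + 1)) * (s + 1) * Real.exp (K * s)) := by
      intro k
      calc dist (F s x) σ
          ≤ dist (F s x) (F s (u (ψ k))) + dist (F s (u (ψ k))) σ := dist_triangle _ _ _
        _ ≤ dist x (u (ψ k)) * Real.exp (K * s)
            + (r + (1 / (ψ k + 1)) * (s + 1) * Real.exp (K * s)) :=
            add_le_add (hgron x hxΛ (u (ψ k)) (huΛ _) s hs) (hutrap (ψ k) s hs)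
        _ = dist (u (ψ k)) x * Real.exp (K * s)
            + (r + (1 / (ψ k + 1)) * (s + 1) * Real.exp (K * s)) := by rw [dist_comm]
    have hlim : Tendsto (fun k => dist (u (ψ k)) x * Real.exp (K * s)
        + (r + (1 / (ψ k + 1)) * (s + 1) * Real.exp (K * s))) atTop
        (nhds (0 * Real.exp (K * s) + (r + 0 * (s + 1) * Real.exp (K * s)))) := by
      refine Tendsto.add (h2.mul_const _) (Tendsto.add tendsto_const_nhds ?_)
      exact (h3.mul_const _).mul_const _
    rw [show (0:ℝ) * Real.exp (K * s) + (r + 0 * (s + 1) * Real.exp (K * s)) = r by ring] at hlim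
    exact ge_of_tendsto hlim (Eventually.of_forall key)

end Part4

section Part5

/-- Convergence along multiples of a period implies convergence in continuous time,
via the Gronwall estimate. -/
lemma bridge {F : ℝ → V → V} {Λ : Set V} {σ : V} {K : ℝ} (hK : 0 ≤ K)
    (hadd : ∀ s t x, F (s + t) x = F s (F t x))
    (hinv : ∀ x ∈ Λ, ∀ t : ℝ, F t x ∈ Λ)
    (hσ : σ ∈ Λ) (hfix : ∀ t, F t σ = σ)
    (hgron : ∀ x ∈ Λ, ∀ y ∈ Λ, ∀ t : ℝ, 0 ≤ t →
      dist (F t x) (F t y) ≤ dist x y * Real.exp (K * t))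
    {x : V} (hx : x ∈ Λ) {T : ℝ} (hT : 0 < T)
    (h : Tendsto (fun n : ℕ => F (n * T) x) atTop (nhds σ)) :
    Tendsto (fun t : ℝ => F t x) atTop (nhds σ) := by
  rw [Metric.tendsto_atTop] at h ⊢
  intro ε hε
  have hE : 0 < Real.exp (K * T) := Real.exp_pos _
  obtain ⟨N, hN⟩ := h (ε / (2 * Real.exp (K * T))) (by positivity)
  refine ⟨(N + 1) * T, fun t ht => ?_⟩
  have hNT : (0:ℝ) ≤ (N + 1) * T := by positivity
  have htpos : 0 ≤ t := le_trans hNT ht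
  set n : ℕ := ⌊t / T⌋₊ with hn
  have hn1 : (n : ℝ) ≤ t / T := Nat.floor_le (by positivity)
  have hn2 : t / T < n + 1 := Nat.lt_floor_add_one _
  have hnT : (n:ℝ) * T ≤ t := by
    rw [← le_div_iff₀ hT]
    exact hn1
  have htn : t - n * T < T := by
    have h1 : t < ((n:ℝ) + 1) * T := by
      rw [← div_lt_iff₀ hT]
      exact hn2
    nlinarith
  have hNn : N ≤ n := by
    have h1 : ((N:ℝ) + 1) * T ≤ t := by exact_mod_cast ht
    have h2 : ((N:ℝ)) ≤ t / T := by
      rw [le_div_iff₀ hT]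
      nlinarith
    exact_mod_cast Nat.le_floor h2
  have hFt : F t x = F (t - n * T) (F (n * T) x) := by
    have hh := hadd (t - n * T) (n * T) x
    rw [show t - n * T + n * T = t by ring] at hh
    exact hh
  have h2 : dist (F t x) σ ≤ dist (F (n * T) x) σ * Real.exp (K * (t - n * T)) := by
    have hg := hgron (F (n * T) x) (hinv x hx _) σ hσ (t - n * T) (by linarith)
    rw [hfix] at hg
    rw [hFt]
    exact hg
  have h3 : dist (F (n * T) x) σ < ε / (2 * Real.exp (K * T)) := hN n hNn
  have h4 : Real.exp (K * (t - n * T)) ≤ Real.exp (K * T) := by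
    apply Real.exp_le_exp.2
    exact mul_le_mul_of_nonneg_left (le_of_lt htn) hK
  calc dist (F t x) σ ≤ dist (F (n * T) x) σ * Real.exp (K * (t - n * T)) := h2
    _ ≤ dist (F (n * T) x) σ * Real.exp (K * T) :=
        mul_le_mul_of_nonneg_left h4 dist_nonneg
    _ < (ε / (2 * Real.exp (K * T))) * Real.exp (K * T) :=
        mul_lt_mul_of_pos_right h3 hE
    _ = ε / 2 := by field_simp
    _ < ε := by linarith

lemma iter_flow {F : ℝ → V → V} (h0 : ∀ x, F 0 x = x)
    (hadd : ∀ s t x, F (s + t) x = F s (F t x)) (T : ℝ) (x : V) :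
    ∀ n : ℕ, (F T)^[n] x = F (n * T) x := by
  intro n
  induction n with
  | zero => simp [h0]
  | succ n ih =>
    rw [Function.iterate_succ_apply', ih]
    have hh := hadd T ((n:ℝ) * T) x
    rw [show (T:ℝ) + (n:ℝ) * T = ((n:ℝ) + 1) * T by ring] at hh
    rw [← hh]
    congr 1
    push_cast
    ring

end Part5

/-- `φ` is the flow generated by the vector field `X`. -/
def IsFlowOf (X : V → V) (φ : ℝ → V → V) : Prop :=
  (∀ x, φ 0 x = x) ∧ (∀ s t x, φ (s + t) x = φ s (φ t x)) ∧
    ∀ x t, HasDerivAt (fun s => φ s x) (X (φ t x)) t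

/-- Invariance of a subbundle `E` under the cocycle `A` over points of `Λ`. -/
def InvariantBundle (φ : ℝ → V → V) (A : ℝ → V → V →L[ℝ] V) (Λ : Set V)
    (E : V → Submodule ℝ V) : Prop :=
  ∀ x ∈ Λ, ∀ t : ℝ, ∀ v ∈ E x, A t x v ∈ E (φ t x)

/-- A dominated splitting `E ⊕ F` over `Λ` for the cocycle `A` over the flow `φ`. -/
def DominatedOn (φ : ℝ → V → V) (A : ℝ → V → V →L[ℝ] V) (Λ : Set V)
    (E F : V → Submodule ℝ V) : Prop :=
  (∀ x ∈ Λ, E x ⊓ F x = ⊥ ∧ E x ⊔ F x = ⊤) ∧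
    InvariantBundle φ A Λ E ∧ InvariantBundle φ A Λ F ∧
    ∃ C > 0, ∃ lam > 0, ∀ x ∈ Λ, ∀ t > 0, ∀ u ∈ E x, ∀ v ∈ F x,
      ‖A t x u‖ * ‖v‖ ≤ C * Real.exp (-lam * t) * (‖u‖ * ‖A t x v‖)

/-- The tangent flow of a flow `φ`: the derivative of the time-`t` map. -/
noncomputable def tangentFlow (φ : ℝ → V → V) (t : ℝ) (x : V) : V →L[ℝ] V :=
  fderiv ℝ (φ t) x

/-- A compact invariant chain transitive set: every pair of points is joined by
`ε`-chains within `Λ` with times `≥ 1`, for every `ε > 0`. -/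
def ChainTransitiveSet {M : Type*} [MetricSpace M] (φ : ℝ → M → M) (Λ : Set M) : Prop :=
  IsCompact Λ ∧ (∀ t : ℝ, φ t '' Λ = Λ) ∧
    ∀ ε > (0 : ℝ), ∀ x ∈ Λ, ∀ y ∈ Λ, ∃ n : ℕ, ∃ xs : ℕ → M, ∃ ts : ℕ → ℝ,
      1 ≤ n ∧ xs 0 = x ∧ xs n = y ∧ (∀ i ≤ n, xs i ∈ Λ) ∧
      ∀ i < n, 1 ≤ ts i ∧ dist (φ (ts i) (xs i)) (xs (i + 1)) < ε

/-- A hyperbolic splitting `Es ⊕ Eu` for the one-parameter linear family `L`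
(e.g. `L t = e^{t·DX(σ)}`): invariant complementary subspaces which are uniformly
contracted, resp. expanded. -/
def IsHypSplitting {W : Type*} [NormedAddCommGroup W] [NormedSpace ℝ W]
    (L : ℝ → W →L[ℝ] W) (Es Eu : Submodule ℝ W) : Prop :=
  Es ⊓ Eu = ⊥ ∧ Es ⊔ Eu = ⊤ ∧
    (∀ (t : ℝ), ∀ v ∈ Es, L t v ∈ Es) ∧ (∀ (t : ℝ), ∀ v ∈ Eu, L t v ∈ Eu) ∧
    ∃ C > (0 : ℝ), ∃ lam > (0 : ℝ), ∀ t > (0 : ℝ),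
      (∀ v ∈ Es, ‖L t v‖ ≤ C * Real.exp (-lam * t) * ‖v‖) ∧
      (∀ v ∈ Eu, ‖L (-t) v‖ ≤ C * Real.exp (-lam * t) * ‖v‖)

/-- The stable set of a point `σ` for the flow `φ`. -/
def stableSet (φ : ℝ → V → V) (σ : V) : Set V :=
  {x | Tendsto (fun t : ℝ => φ t x) atTop (nhds σ)}

/-- The unstable set of a point `σ` for the flow `φ`. -/
def unstableSet (φ : ℝ → V → V) (σ : V) : Set V :=
  {x | Tendsto (fun t : ℝ => φ t x) atBot (nhds σ)}

/-- A non-trivial chain transitive set containing a hyperbolic singularity `σ`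
intersects both `W^s(σ) \ {σ}` and `W^u(σ) \ {σ}`. -/
theorem chainTransitive_meets_stable_unstable [FiniteDimensional ℝ V]
    (X : V → V) (hX : ContDiff ℝ 1 X) (φ : ℝ → V → V) (hφ : IsFlowOf X φ)
    (Λ : Set V) (hΛ : ChainTransitiveSet φ Λ)
    (hnontriv : ¬ ∃ (p : V) (T : ℝ), 0 < T ∧ φ T p = p ∧ Λ = Set.range fun t : ℝ => φ t p)
    (σ : V) (hσΛ : σ ∈ Λ) (hsing : X σ = 0)
    (Es Eu : Submodule ℝ V)
    (hhyp : IsHypSplitting (fun t => tangentFlow φ t σ) Es Eu) :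
    (Λ ∩ (stableSet φ σ \ {σ})).Nonempty ∧ (Λ ∩ (unstableSet φ σ \ {σ})).Nonempty := by
  classical
  obtain ⟨h0, hadd, hder⟩ := hφ
  obtain ⟨hcomp, him, hch⟩ := hΛ
  have hinv : ∀ x ∈ Λ, ∀ t : ℝ, φ t x ∈ Λ := fun x hx t => by
    rw [← him t]; exact mem_image_of_mem _ hx
  -- the time-reversed flow
  set Fl : ℝ → V → V := fun t x => φ (-t) x with hFl
  have h0' : ∀ x, Fl 0 x = x := fun x => by simp only [hFl, neg_zero]; exact h0 x
  have hadd' : ∀ s t x, Fl (s + t) x = Fl s (Fl t x) := fun s t x => by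
    show φ (-(s + t)) x = φ (-s) (φ (-t) x)
    rw [show -(s + t) = -s + -t by ring, hadd]
  have hder' : ∀ x t, HasDerivAt (fun s => Fl s x) ((fun v => -X v) (Fl t x)) t := by
    intro x t
    have h1 : HasDerivAt (fun s : ℝ => φ s x) (X (φ (-t) x)) (-t) := hder x (-t)
    have h2 : HasDerivAt (fun s : ℝ => -s) (-1 : ℝ) t := (hasDerivAt_id t).neg
    have h3 := h1.scomp t h2
    simpa [Function.comp_def] using h3
  have hXd : Differentiable ℝ X := hX.differentiable one_ne_zero
  have hXσd : DifferentiableAt ℝ X σ := hXd σ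
  -- σ is a fixed point of both flows
  have hfixpos : ∀ t : ℝ, 0 ≤ t → φ t σ = σ := fun t ht => flow_fix hder h0 hXσd hsing ht
  have hfixneg : ∀ t : ℝ, 0 ≤ t → Fl t σ = σ := fun t ht =>
    flow_fix (X := fun v => -X v) hder' h0' hXσd.neg (by simp [hsing]) ht
  have hfix : ∀ t : ℝ, φ t σ = σ := by
    intro t
    rcases le_or_gt 0 t with h | h
    · exact hfixpos t h
    · have h1 := hfixneg (-t) (by linarith)
      simpa [hFl] using h1
  have hfix' : ∀ t : ℝ, Fl t σ = σ := fun t => hfix (-t)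
  -- the set Λ is not just {σ}
  obtain ⟨y₀, hy₀Λ, hy₀ne⟩ : ∃ y ∈ Λ, y ≠ σ := by
    by_contra hcc
    push_neg at hcc
    apply hnontriv
    refine ⟨σ, 1, one_pos, hfix 1, ?_⟩
    apply Subset.antisymm
    · intro y hy
      exact ⟨0, by show φ 0 σ = y; rw [h0, hcc y hy]⟩
    · rintro y ⟨t, rfl⟩
      show φ t σ ∈ Λ
      rw [hfix]
      exact hσΛ
  have hy₀pos : 0 < dist y₀ σ := dist_pos.2 hy₀ne
  -- Lipschitz bound for X (and -X) on a large ball containing Λ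
  obtain ⟨R, hR⟩ := hcomp.isBounded.subset_closedBall 0
  set B : Set V := closedBall (0 : V) (|R| + 1) with hB
  have hΛB : Λ ⊆ B :=
    subset_trans hR (closedBall_subset_closedBall (by
      have := le_abs_self R
      linarith))
  have hBcomp : IsCompact B := isCompact_closedBall _ _
  have hBconv : Convex ℝ B := convex_closedBall _ _
  obtain ⟨C0, hC0⟩ := hBcomp.exists_bound_of_continuousOn
    ((hX.continuous_fderiv one_ne_zero).continuousOn)
  set K : NNReal := Real.toNNReal C0 with hKdef
  have hKb : ∀ v ∈ B, ‖fderiv ℝ X v‖₊ ≤ K := by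
    intro v hv
    rw [← NNReal.coe_le_coe, coe_nnnorm]
    exact le_trans (hC0 v hv) (Real.le_coe_toNNReal C0)
  have hLip : LipschitzOnWith K X B :=
    Convex.lipschitzOnWith_of_nnnorm_fderiv_le (fun v _ => hXd v) hKb hBconv
  have hLip' : LipschitzOnWith K (fun v => -X v) B := by
    intro a ha b hb
    have := hLip ha hb
    simpa [edist_neg_neg] using this
  have hKR : (0:ℝ) ≤ (K : ℝ) := K.coe_nonneg
  have hgron : ∀ x ∈ Λ, ∀ y ∈ Λ, ∀ t : ℝ, 0 ≤ t →
      dist (φ t x) (φ t y) ≤ dist x y * Real.exp (K * t) :=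
    fun x hx y hy t ht => flow_gron hLip h0 hder hΛB hinv hx hy ht
  have hinv' : ∀ x ∈ Λ, ∀ t : ℝ, Fl t x ∈ Λ := fun x hx t => hinv x hx (-t)
  have hgron' : ∀ x ∈ Λ, ∀ y ∈ Λ, ∀ t : ℝ, 0 ≤ t →
      dist (Fl t x) (Fl t y) ≤ dist x y * Real.exp (K * t) :=
    fun x hx y hy t ht => flow_gron hLip' h0' hder' hΛB hinv' hx hy ht
  have hcontφ : ∀ x, Continuous fun s => φ s x :=
    fun x => continuous_iff_continuousAt.2 fun u => (hder x u).continuousAt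
  have hcontFl : ∀ x, Continuous fun s => Fl s x :=
    fun x => continuous_iff_continuousAt.2 fun u => (hder' x u).continuousAt
  -- derivative of the time-t maps at σ
  set A : V →L[ℝ] V := fderiv ℝ X σ with hA
  have hDpos : ∀ t : ℝ, 0 ≤ t → HasFDerivAt (φ t) (NormedSpace.exp (t • A)) σ :=
    fun t ht => flow_hasFDerivAt_fix hX h0 hder hsing ht
  have hDneg : ∀ t : ℝ, 0 ≤ t → HasFDerivAt (Fl t) (NormedSpace.exp (-(t • A))) σ := by
    intro t ht
    have h1 := flow_hasFDerivAt_fix (X := fun v => -X v) (φ := Fl) (σ := σ) hX.neg h0' hder'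
      (by simp [hsing]) ht
    have h2 : fderiv ℝ (fun v => -X v) σ = -A := fderiv_neg
    rw [h2] at h1
    rwa [smul_neg] at h1
  have hD : ∀ t : ℝ, HasFDerivAt (φ t) (NormedSpace.exp (t • A)) σ := by
    intro t
    rcases le_or_gt 0 t with h | h
    · exact hDpos t h
    · have h1 := hDneg (-t) (by linarith)
      have h2 : Fl (-t) = φ t := by funext y; simp [hFl]
      rw [h2] at h1
      have h3 : -(-t • A) = t • A := by rw [neg_smul, neg_neg]
      rwa [h3] at h1
  have htf : ∀ t : ℝ, tangentFlow φ t σ = NormedSpace.exp (t • A) := fun t => (hD t).fderiv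
  -- unpack hyperbolicity in terms of the exponential
  obtain ⟨hbot, htop, hinvEs, hinvEu, C, hC, lam, hlam, hbounds⟩ := hhyp
  have hEs : ∀ t : ℝ, ∀ v ∈ Es, NormedSpace.exp (t • A) v ∈ Es := by
    intro t v hv
    have h1 := hinvEs t v hv
    simpa [htf] using h1
  have hEu : ∀ t : ℝ, ∀ v ∈ Eu, NormedSpace.exp (t • A) v ∈ Eu := by
    intro t v hv
    have h1 := hinvEu t v hv
    simpa [htf] using h1
  have hbs : ∀ t : ℝ, 0 < t →
      (∀ v ∈ Es, ‖NormedSpace.exp (t • A) v‖ ≤ C * Real.exp (-lam * t) * ‖v‖) ∧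
      (∀ v ∈ Eu, ‖NormedSpace.exp (-(t • A)) v‖ ≤ C * Real.exp (-lam * t) * ‖v‖) := by
    intro t ht
    have h1 := hbounds t ht
    constructor
    · intro v hv
      have h2 := h1.1 v hv
      simpa [htf] using h2
    · intro v hv
      have h2 := h1.2 v hv
      have h3 : tangentFlow φ (-t) σ = NormedSpace.exp (-(t • A)) := by
        rw [htf (-t), neg_smul]
      simp only [h3] at h2
      exact h2
  have hcompl : IsCompl Es Eu := ⟨disjoint_iff.2 hbot, codisjoint_iff.2 htop⟩
  -- choose a large time T so that the time-T maps are strongly hyperbolic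
  obtain ⟨T, hT1, hTc⟩ : ∃ T : ℝ, 1 ≤ T ∧ C * Real.exp (-lam * T) < 1 / 8 := by
    have h2 : Tendsto (fun x : ℝ => lam * x) atTop atTop :=
      (tendsto_id (α := ℝ)).const_mul_atTop hlam
    have h3 : Tendsto (fun x : ℝ => -lam * x) atTop atBot := by
      have h := tendsto_neg_atTop_atBot.comp h2
      have he : (Neg.neg ∘ fun x : ℝ => lam * x) = fun x : ℝ => -lam * x := by
        funext x
        simp [neg_mul]
      rwa [he] at h
    have h1 : Tendsto (fun x : ℝ => C * Real.exp (-lam * x)) atTop (nhds (C * 0)) :=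
      Tendsto.const_mul C (Real.tendsto_exp_atBot.comp h3)
    rw [mul_zero] at h1
    have h4 := h1.eventually (gt_mem_nhds (by norm_num : (0:ℝ) < 1 / 8))
    obtain ⟨T, hT⟩ := (h4.and (eventually_ge_atTop (1:ℝ))).exists
    exact ⟨T, hT.2, hT.1⟩
  set θ : ℝ := C * Real.exp (-lam * T) with hθ
  have hθpos : 0 < θ := by positivity
  have hθle : θ ≤ 1 / 8 := le_of_lt hTc
  have hTpos : 0 < T := lt_of_lt_of_le one_pos hT1
  have hbT := hbs T hTpos
  -- exp(T•A) and exp(-(T•A)) are mutually inverse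
  have hexpinv : ∀ v : V,
      NormedSpace.exp (T • A) (NormedSpace.exp (-(T • A)) v) = v ∧
      NormedSpace.exp (-(T • A)) (NormedSpace.exp (T • A) v) = v := by
    have hcomm1 : Commute (T • A) (-(T • A)) := (Commute.refl (T • A)).neg_right
    have hcomm2 : Commute (-(T • A)) (T • A) := (Commute.refl (T • A)).neg_left
    have h1 : NormedSpace.exp (T • A) * NormedSpace.exp (-(T • A)) = 1 := by
      rw [← NormedSpace.exp_add_of_commute_of_mem_ball (𝕂 := ℝ) hcomm1
        ((NormedSpace.expSeries_radius_eq_top ℝ (V →L[ℝ] V)).symm ▸ edist_lt_top _ _) ((NormedSpace.expSeries_radius_eq_top ℝ (V →L[ℝ] V)).symm ▸ edist_lt_top _ _), add_neg_cancel, NormedSpace.exp_zero]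
    have h2 : NormedSpace.exp (-(T • A)) * NormedSpace.exp (T • A) = 1 := by
      rw [← NormedSpace.exp_add_of_commute_of_mem_ball (𝕂 := ℝ) hcomm2
        ((NormedSpace.expSeries_radius_eq_top ℝ (V →L[ℝ] V)).symm ▸ edist_lt_top _ _) ((NormedSpace.expSeries_radius_eq_top ℝ (V →L[ℝ] V)).symm ▸ edist_lt_top _ _), neg_add_cancel, NormedSpace.exp_zero]
    intro v
    constructor
    · have h3 := congrArg (fun M : V →L[ℝ] V => M v) h1
      simpa [ContinuousLinearMap.mul_apply] using h3
    · have h3 := congrArg (fun M : V →L[ℝ] V => M v) h2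
      simpa [ContinuousLinearMap.mul_apply] using h3
  -- discrete trapping, stable side
  obtain ⟨δs, hδs, hstab⟩ := discrete_stable (f := φ T) (L := NormedSpace.exp (T • A)) (p := σ)
    hcompl (hfix T) (hDpos T hTpos.le)
    (fun v hv => hEs T v hv) (fun v hv => hEu T v hv) hθpos hθle
    (fun v hv => hbT.1 v hv)
    (fun v hv => by
      have h1 := hbT.2 (NormedSpace.exp (T • A) v) (hEu T v hv)
      rw [(hexpinv v).2] at h1
      exact h1)
  -- discrete trapping, unstable side (roles of Es and Eu swapped, flow reversed)
  have hEuneg : ∀ v ∈ Eu, NormedSpace.exp (-(T • A)) v ∈ Eu := by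
    intro v hv
    have h1 := hEu (-T) v hv
    rwa [neg_smul] at h1
  have hEsneg : ∀ v ∈ Es, NormedSpace.exp (-(T • A)) v ∈ Es := by
    intro v hv
    have h1 := hEs (-T) v hv
    rwa [neg_smul] at h1
  obtain ⟨δu, hδu, hunst⟩ := discrete_stable (f := Fl T) (L := NormedSpace.exp (-(T • A)))
    (p := σ) hcompl.symm (hfix' T) (hDneg T hTpos.le)
    hEuneg hEsneg hθpos hθle
    (fun v hv => hbT.2 v hv)
    (fun v hv => by
      have h1 := hbT.1 (NormedSpace.exp (-(T • A)) v) (hEsneg v hv)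
      rw [(hexpinv v).1] at h1
      exact h1)
  -- trapping radii
  set rs : ℝ := min (dist y₀ σ) δs with hrs
  have hrspos : 0 < rs := lt_min hy₀pos hδs
  set ru : ℝ := min (dist y₀ σ / 2) δu with hru
  have hrupos : 0 < ru := lt_min (by positivity) hδu
  -- chains y₀ → σ for the forward flow
  have hchain_s : ∀ ε : ℝ, 0 < ε → ∃ (n : ℕ) (z : ℕ → V) (ts : ℕ → ℝ), 1 ≤ n ∧
      (∀ i ≤ n, z i ∈ Λ) ∧ rs ≤ dist (z 0) σ ∧ z n = σ ∧
      ∀ i < n, 1 ≤ ts i ∧ dist (φ (ts i) (z i)) (z (i + 1)) < ε := by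
    intro ε hε
    obtain ⟨n, xs, ts, hn, hx0, hxn, hxsΛ, hhop⟩ := hch ε hε y₀ hy₀Λ σ hσΛ
    exact ⟨n, xs, ts, hn, hxsΛ, by rw [hx0]; exact min_le_left _ _, hxn, hhop⟩
  obtain ⟨xs, hxsΛ, hxsr, hxstrap⟩ :=
    trap hKR h0 hadd hcontφ hinv hcomp hσΛ hfix hgron hrspos hchain_s
  -- chains for the reversed flow by exact reversal of chains σ → y₀
  have hinvol : ∀ (t : ℝ) (y : V), Fl t (φ t y) = y := by
    intro t y
    show φ (-t) (φ t y) = y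
    rw [← hadd, neg_add_cancel, h0]
  have hchain_u : ∀ ε : ℝ, 0 < ε → ∃ (n : ℕ) (z : ℕ → V) (ts' : ℕ → ℝ), 1 ≤ n ∧
      (∀ i ≤ n, z i ∈ Λ) ∧ ru ≤ dist (z 0) σ ∧ z n = σ ∧
      ∀ i < n, 1 ≤ ts' i ∧ dist (Fl (ts' i) (z i)) (z (i + 1)) < ε := by
    intro ε hε
    set ε' : ℝ := min ε (dist y₀ σ / 2) with hε'
    have hε'pos : 0 < ε' := lt_min hε (by positivity)
    obtain ⟨n, w, ts, hn, hw0, hwn, hwΛ, hhop⟩ := hch ε' hε'pos σ hσΛ y₀ hy₀Λ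
    refine ⟨n, (fun j => if j = n then σ else φ (ts (n - 1 - j)) (w (n - 1 - j))),
      (fun j => ts (n - 1 - j)), hn, ?_, ?_, by simp, ?_⟩
    · intro i _
      by_cases h : i = n
      · simp [h, hσΛ]
      · simp only [h, if_false]
        exact hinv _ (hwΛ _ (by omega)) _
    · have h0n : (0 : ℕ) ≠ n := by omega
      simp only [h0n, if_false]
      have h1 : dist (φ (ts (n - 1 - 0)) (w (n - 1 - 0))) y₀ < ε' := by
        have h2 := (hhop (n - 1) (by omega)).2
        rw [show n - 1 - 0 = n - 1 by omega]
        have h3 : n - 1 + 1 = n := by omega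
        rw [h3] at h2
        rwa [hwn] at h2
      have h4 : dist y₀ σ ≤ dist y₀ (φ (ts (n - 1 - 0)) (w (n - 1 - 0)))
          + dist (φ (ts (n - 1 - 0)) (w (n - 1 - 0))) σ := dist_triangle _ _ _
      rw [dist_comm] at h1
      have h5 : ε' ≤ dist y₀ σ / 2 := min_le_right _ _
      have h6 : ru ≤ dist y₀ σ / 2 := min_le_left _ _
      linarith
    · intro i hi
      refine ⟨(hhop (n - 1 - i) (by omega)).1, ?_⟩
      by_cases h : i + 1 = n
      · have hne : i ≠ n := by omega
        simp only [hne, if_false, h, if_true]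
        rw [hinvol]
        rw [show n - 1 - i = 0 by omega, hw0]
        simpa using hε
      · have hne : i ≠ n := by omega
        simp only [hne, if_false, h, if_false]
        rw [hinvol]
        have h2 := (hhop (n - 2 - i) (by omega)).2
        rw [dist_comm]
        rw [show n - 1 - (i + 1) = n - 2 - i by omega]
        have h3 : n - 2 - i + 1 = n - 1 - i := by omega
        rw [h3] at h2
        exact lt_of_lt_of_le h2 (min_le_left _ _)
  obtain ⟨xu, hxuΛ, hxur, hxutrap⟩ :=
    trap (F := Fl) hKR h0' hadd' hcontFl hinv' hcomp hσΛ hfix' hgron' hrupos hchain_u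
  -- stable side conclusion
  have hstail : Tendsto (fun t : ℝ => φ t xs) atTop (nhds σ) := by
    have hdisc := hstab xs (fun n => by
      rw [iter_flow h0 hadd T xs n, ← dist_eq_norm]
      exact le_trans (hxstrap ((n : ℝ) * T) (by positivity)) (min_le_right _ _))
    have hre : (fun n : ℕ => (φ T)^[n] xs) = fun n : ℕ => φ ((n : ℝ) * T) xs := by
      funext n
      exact iter_flow h0 hadd T xs n
    rw [hre] at hdisc
    exact bridge hKR hadd hinv hσΛ hfix hgron hxsΛ hTpos hdisc
  have hutail : Tendsto (fun t : ℝ => φ t xu) atBot (nhds σ) := by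
    have hdisc := hunst xu (fun n => by
      rw [iter_flow h0' hadd' T xu n, ← dist_eq_norm]
      exact le_trans (hxutrap ((n : ℝ) * T) (by positivity)) (min_le_right _ _))
    have hre : (fun n : ℕ => (Fl T)^[n] xu) = fun n : ℕ => Fl ((n : ℝ) * T) xu := by
      funext n
      exact iter_flow h0' hadd' T xu n
    rw [hre] at hdisc
    have h1 := bridge (F := Fl) hKR hadd' hinv' hσΛ hfix' hgron' hxuΛ hTpos hdisc
    have h2 : (fun t : ℝ => φ t xu) = (fun s : ℝ => Fl s xu) ∘ (fun t : ℝ => -t) := by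
      funext t
      simp [hFl]
    rw [h2]
    exact h1.comp tendsto_neg_atBot_atTop
  have hxsne : xs ≠ σ := by
    intro h
    rw [h] at hxsr
    simp at hxsr
    linarith
  have hxune : xu ≠ σ := by
    intro h
    rw [h] at hxur
    simp at hxur
    linarith
  exact ⟨⟨xs, hxsΛ, hstail, by simp [hxsne]⟩, ⟨xu, hxuΛ, hutail, by simp [hxune]⟩⟩
end

section
/- For a C¹ vector field X, a compact set K, sequences X_n → X in C¹ topology and compact sets K_n → K in Hausdorff topology, one has limsup_{n→∞} CR(X_n, K_n) ⊂ CR(X, K). -/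
open Set Metric Filter Module
open scoped NNReal

variable {V : Type*} [NormedAddCommGroup V] [NormedSpace ℝ V]

/-- `CR(X, K)`: the union of all chain transitive sets of the flow `φ` contained in `K`. -/
def CRset {M : Type*} [MetricSpace M] (φ : ℝ → M → M) (K : Set M) : Set M :=
  {x | ∃ Λ : Set M, Λ ⊆ K ∧ ChainTransitiveSet φ Λ ∧ x ∈ Λ}

/-- `Xₙ → X` in the `C¹` topology. -/
def TendstoC1 (Xn : ℕ → V → V) (X : V → V) : Prop :=
  TendstoUniformly Xn X atTop ∧
    TendstoUniformly (fun n x => fderiv ℝ (Xn n) x) (fun x => fderiv ℝ X x) atTop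

lemma gronwallBound_mono_time {δ K ε : ℝ} (hδ : 0 ≤ δ) (hK : 0 < K) (hε : 0 ≤ ε)
    {s t : ℝ} (hst : s ≤ t) : gronwallBound δ K ε s ≤ gronwallBound δ K ε t := by
  simp only [gronwallBound_of_K_ne_0 hK.ne']
  have h1 : Real.exp (K * s) ≤ Real.exp (K * t) :=
    Real.exp_le_exp.2 (mul_le_mul_of_nonneg_left hst hK.le)
  have h2 : (0:ℝ) ≤ ε / K := div_nonneg hε hK.le
  nlinarith

lemma gronwallBound_mono_de {δ δ' K ε ε' x : ℝ} (hK : 0 < K) (hx : 0 ≤ x)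
    (h1 : δ ≤ δ') (h2 : ε ≤ ε') : gronwallBound δ K ε x ≤ gronwallBound δ' K ε' x := by
  simp only [gronwallBound_of_K_ne_0 hK.ne']
  have h3 : (0:ℝ) < Real.exp (K * x) := Real.exp_pos _
  have h4 : (0:ℝ) ≤ Real.exp (K * x) - 1 := by
    have : (1:ℝ) ≤ Real.exp (K * x) := Real.one_le_exp (by positivity)
    linarith
  have h5 : ε / K ≤ ε' / K := by gcongr
  nlinarith

lemma exists_gronwall_small {K c : ℝ} (hK : 0 < K) (hc : 0 < c) :
    ∃ δ > 0, ∃ ε > 0, gronwallBound δ K ε 2 < c := by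
  refine ⟨c / (4 * Real.exp (K * 2)), by positivity, K * c / (4 * Real.exp (K * 2)), by positivity, ?_⟩
  simp only [gronwallBound_of_K_ne_0 hK.ne']
  have h3 : (0:ℝ) < Real.exp (K * 2) := Real.exp_pos _
  have h4 : (0:ℝ) ≤ Real.exp (K * 2) - 1 := by
    have : (1:ℝ) ≤ Real.exp (K * 2) := Real.one_le_exp (by positivity)
    linarith
  have e1 : c / (4 * Real.exp (K * 2)) * Real.exp (K * 2) = c / 4 := by
    field_simp
  have e0 : K * c / (4 * Real.exp (K * 2)) / K = c / (4 * Real.exp (K * 2)) := by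
    field_simp
  have e2 : K * c / (4 * Real.exp (K * 2)) / K * (Real.exp (K * 2) - 1) ≤ c / 4 := by
    rw [e0]
    calc c / (4 * Real.exp (K * 2)) * (Real.exp (K * 2) - 1)
        ≤ c / (4 * Real.exp (K * 2)) * Real.exp (K * 2) := by
          have hp : (0:ℝ) ≤ c / (4 * Real.exp (K * 2)) := by positivity
          nlinarith
      _ = c / 4 := e1
  linarith
lemma exists_lipschitz_ball [FiniteDimensional ℝ V] {X : V → V} (hX : ContDiff ℝ 1 X) (R : ℝ) :
    ∃ L : ℝ≥0, 0 < (L:ℝ) ∧ LipschitzOnWith L X (closedBall (0:V) R) := by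
  have hco : IsCompact (closedBall (0:V) R) := isCompact_closedBall _ _
  have hcont : ContinuousOn (fun x => ‖fderiv ℝ X x‖) (closedBall (0:V) R) :=
    ((hX.continuous_fderiv one_ne_zero).norm).continuousOn
  obtain ⟨C, hC⟩ := hco.exists_bound_of_continuousOn hcont
  refine ⟨⟨max C 0, le_max_right _ _⟩ + 1, by positivity, ?_⟩
  apply Convex.lipschitzOnWith_of_nnnorm_fderiv_le (fun x _ => (hX.differentiable one_ne_zero) x)
    (fun x hx => ?_) (convex_closedBall _ _)
  have h1 : ‖fderiv ℝ X x‖ ≤ max C 0 := le_trans (le_trans (le_abs_self _) (by simpa [Real.norm_eq_abs] using hC x hx)) (le_max_left _ _)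
  rw [← NNReal.coe_le_coe]
  push_cast
  change _ ≤ max C 0 + 1
  linarith
lemma flow_compare {Y Z : V → V} {ψ χ : ℝ → V} {t R δ ε : ℝ} {L : ℝ≥0}
    (hL : 0 < (L:ℝ)) (ht : 0 ≤ t)
    (hlip : LipschitzOnWith L Z (closedBall (0:V) R))
    (hψ : ∀ s, HasDerivAt ψ (Y (ψ s)) s) (hχ : ∀ s, HasDerivAt χ (Z (χ s)) s)
    (hχB : ∀ s ∈ Icc 0 t, χ s ∈ closedBall (0:V) (R - 1))
    (hYZ : ∀ u, dist (Y u) (Z u) ≤ ε) (hδ0 : 0 ≤ δ) (hε0 : 0 ≤ ε)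
    (h0 : dist (ψ 0) (χ 0) ≤ δ) (hsmall : gronwallBound δ L ε t < 1) :
    ∀ s ∈ Icc 0 t, dist (ψ s) (χ s) ≤ gronwallBound δ L ε s := by
  have hψc : Continuous ψ := by
    rw [continuous_iff_continuousAt]; exact fun s => (hψ s).continuousAt
  have hχc : Continuous χ := by
    rw [continuous_iff_continuousAt]; exact fun s => (hχ s).continuousAt
  set f : ℝ → V := fun s => ψ s - χ s with hf
  have hfc : Continuous f := hψc.sub hχc
  -- key : Gronwall on an initial segment where ψ stays near χ
  have key : ∀ s' ∈ Icc 0 t, (∀ u ∈ Ico 0 s', dist (ψ u) (χ u) < 1) →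
      ∀ s ∈ Icc 0 s', ‖f s‖ ≤ gronwallBound δ L ε s := by
    intro s' hs' hnear s hs
    have := norm_le_gronwallBound_of_norm_deriv_right_le (f := f)
      (f' := fun u => Y (ψ u) - Z (χ u)) (δ := δ) (K := L) (ε := ε) (a := 0) (b := s')
      hfc.continuousOn
      (fun u _ => ((hψ u).sub (hχ u)).hasDerivWithinAt)
      (by simpa [hf, ← dist_eq_norm] using h0)
      (fun u hu => ?_) s hs
    · simpa using this
    · have hut : u ∈ Icc 0 t := ⟨hu.1, le_trans hu.2.le hs'.2⟩
      have hχu : χ u ∈ closedBall (0:V) (R - 1) := hχB u hut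
      have hψu : ψ u ∈ closedBall (0:V) R := by
        rw [mem_closedBall] at hχu ⊢
        have h1 : dist (ψ u) (χ u) < 1 := hnear u hu
        have := dist_triangle (ψ u) (χ u) (0:V)
        linarith
      have h2 : dist (Z (ψ u)) (Z (χ u)) ≤ (L:ℝ) * dist (ψ u) (χ u) :=
        hlip.dist_le_mul _ hψu _ (closedBall_subset_closedBall (by linarith) hχu)
      calc ‖Y (ψ u) - Z (χ u)‖ = dist (Y (ψ u)) (Z (χ u)) := (dist_eq_norm _ _).symm
        _ ≤ dist (Y (ψ u)) (Z (ψ u)) + dist (Z (ψ u)) (Z (χ u)) := dist_triangle _ _ _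
        _ ≤ ε + (L:ℝ) * dist (ψ u) (χ u) := add_le_add (hYZ _) h2
        _ = (L:ℝ) * ‖f u‖ + ε := by rw [dist_eq_norm]; ring
  by_cases hA : {s | s ∈ Icc 0 t ∧ 1 ≤ dist (ψ s) (χ s)}.Nonempty
  · exfalso
    set A := {s | s ∈ Icc 0 t ∧ 1 ≤ dist (ψ s) (χ s)} with hAdef
    have hAclosed : IsClosed A :=
      (isClosed_Icc.inter (isClosed_le continuous_const ((hψc.dist hχc))) : IsClosed _)
    have hbdd : BddBelow A := ⟨0, fun u hu => hu.1.1⟩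
    have hmem := hAclosed.csInf_mem hA hbdd
    set s0 := sInf A with hs0
    have hs0t : s0 ∈ Icc 0 t := hmem.1
    have hnear : ∀ u ∈ Ico 0 s0, dist (ψ u) (χ u) < 1 := by
      intro u hu
      by_contra hcon
      push_neg at hcon
      have : u ∈ A := ⟨⟨hu.1, le_trans hu.2.le hs0t.2⟩, hcon⟩
      exact absurd (csInf_le hbdd this) (not_le.2 hu.2)
    have := key s0 hs0t hnear s0 ⟨hs0t.1, le_refl _⟩
    have hmono := gronwallBound_mono_time hδ0 hL hε0 hs0t.2
    rw [← dist_eq_norm] at this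
    linarith [hmem.2]
  · intro s hs
    have hnear : ∀ u ∈ Ico 0 s, dist (ψ u) (χ u) < 1 := by
      intro u hu
      by_contra hcon
      push_neg at hcon
      exact hA ⟨u, ⟨hu.1, le_trans hu.2.le hs.2⟩, hcon⟩
    have := key s hs hnear s ⟨hs.1, le_refl _⟩
    rwa [← dist_eq_norm] at this
lemma uniform_flow_compare [FiniteDimensional ℝ V] {X : V → V} {φ : ℝ → V → V}
    (hX : ContDiff ℝ 1 X) (hφ0 : ∀ x, φ 0 x = x)
    (hφd : ∀ x t, HasDerivAt (fun s => φ s x) (X (φ t x)) t)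
    {Λ : Set V} (hΛ : IsCompact Λ) {ζ : ℝ} (hζ : 0 < ζ) :
    ∃ δ > 0, ∃ ε' > 0, ∀ Y : V → V, (∀ u, dist (Y u) (X u) ≤ ε') →
      ∀ ψ : ℝ → V, (∀ s, HasDerivAt ψ (Y (ψ s)) s) →
      ∀ y ∈ Λ, dist (ψ 0) y ≤ δ → ∀ s ∈ Icc (0:ℝ) 2, dist (ψ s) (φ s y) ≤ ζ := by
  rcases Λ.eq_empty_or_nonempty with hem | hne
  · exact ⟨1, one_pos, 1, one_pos, fun Y _ ψ _ y hy => by simp [hem] at hy⟩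
  set c0 := min ζ 1 / 2 with hc0def
  have hc0 : 0 < c0 := by positivity
  have hc1 : c0 < 1 := by
    have : min ζ 1 ≤ 1 := min_le_right _ _
    rw [hc0def]; linarith
  -- pointwise claim
  have claim : ∀ y : V, ∃ δy > (0:ℝ), ∃ εy > (0:ℝ),
      ∀ Y : V → V, (∀ u, dist (Y u) (X u) ≤ εy) →
      ∀ ψ : ℝ → V, (∀ s, HasDerivAt ψ (Y (ψ s)) s) →
      dist (ψ 0) y ≤ δy → ∀ s ∈ Icc (0:ℝ) 2, dist (ψ s) (φ s y) ≤ c0 := by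
    intro y
    have hχd : ∀ s, HasDerivAt (fun s => φ s y) (X (φ s y)) s := fun s => hφd y s
    have hχc : Continuous fun s => φ s y := by
      rw [continuous_iff_continuousAt]; exact fun s => (hχd s).continuousAt
    have hCcomp : IsCompact ((fun s => φ s y) '' Icc (0:ℝ) 2) := isCompact_Icc.image hχc
    obtain ⟨r, hr⟩ := hCcomp.isBounded.subset_closedBall (0:V)
    obtain ⟨L, hL, hlip⟩ := exists_lipschitz_ball hX (r + 2)
    obtain ⟨δy, hδy, εy, hεy, hsmall⟩ := exists_gronwall_small hL hc0
    refine ⟨δy, hδy, εy, hεy, fun Y hY ψ hψ h0 s hs => ?_⟩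
    have hcmp := flow_compare (χ := fun s => φ s y) hL (by norm_num : (0:ℝ) ≤ 2) hlip hψ hχd
      (fun u hu => ?_) hY hδy.le hεy.le (by simpa [hφ0] using h0) (lt_trans hsmall hc1) s hs
    · calc dist (ψ s) (φ s y) ≤ gronwallBound δy L εy s := hcmp
        _ ≤ gronwallBound δy L εy 2 := gronwallBound_mono_time hδy.le hL hεy.le hs.2
        _ ≤ c0 := hsmall.le
    · have : φ u y ∈ closedBall (0:V) r := hr (mem_image_of_mem _ hu)
      exact closedBall_subset_closedBall (by linarith) this
  choose δf hδf εf hεf Hf using claim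
  -- finite subcover
  obtain ⟨T, hTmem, hTcov⟩ := hΛ.elim_nhds_subcover (fun y => ball y (δf y / 2))
    (fun y _ => ball_mem_nhds _ (by have := hδf y; positivity))
  have hTne : T.Nonempty := by
    obtain ⟨y0, hy0⟩ := hne
    obtain ⟨i, hi, _⟩ := mem_iUnion₂.1 (hTcov hy0)
    exact ⟨i, hi⟩
  refine ⟨T.inf' hTne (fun y => δf y / 2), ?_, T.inf' hTne εf, ?_, ?_⟩
  · rw [gt_iff_lt, Finset.lt_inf'_iff]
    exact fun y _ => by have := hδf y; positivity
  · rw [gt_iff_lt, Finset.lt_inf'_iff]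
    exact fun y _ => hεf y
  intro Y hY ψ hψ y hy h0 s hs
  obtain ⟨i, hiT, hyi⟩ := mem_iUnion₂.1 (hTcov hy)
  have hd1 : dist (ψ 0) i ≤ δf i := by
    have h2 : dist y i < δf i / 2 := mem_ball.1 hyi
    have h3 : T.inf' hTne (fun y => δf y / 2) ≤ δf i / 2 := Finset.inf'_le _ hiT
    calc dist (ψ 0) i ≤ dist (ψ 0) y + dist y i := dist_triangle _ _ _
      _ ≤ δf i := by linarith
  have hY' : ∀ u, dist (Y u) (X u) ≤ εf i := fun u =>
    le_trans (hY u) (Finset.inf'_le _ hiT)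
  have hb1 : dist (ψ s) (φ s i) ≤ c0 := Hf i Y hY' ψ hψ hd1 s hs
  have hb2 : dist (φ s y) (φ s i) ≤ c0 := by
    refine Hf i X (fun u => by simp [hεf i |>.le]) (fun s => φ s y) (fun s => hφd y s) ?_ s hs
    show dist (φ 0 y) i ≤ δf i
    rw [hφ0]
    exact le_trans (mem_ball.1 hyi).le (by linarith [hδf i])
  calc dist (ψ s) (φ s y) ≤ dist (ψ s) (φ s i) + dist (φ s y) (φ s i) := dist_triangle_right _ _ _
    _ ≤ c0 + c0 := add_le_add hb1 hb2
    _ ≤ ζ := by rw [hc0def]; have := min_le_left ζ 1; linarith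
def ChainIcc {M : Type*} [MetricSpace M] (φ : ℝ → M → M) (S : Set M) (ε : ℝ) (a b : M) : Prop :=
  ∃ n : ℕ, ∃ xs : ℕ → M, ∃ ts : ℕ → ℝ, 1 ≤ n ∧ xs 0 = a ∧ xs n = b ∧ (∀ i ≤ n, xs i ∈ S) ∧
    ∀ i < n, ts i ∈ Icc (1:ℝ) 2 ∧ dist (φ (ts i) (xs i)) (xs (i + 1)) < ε

lemma ChainIcc.single {M : Type*} [MetricSpace M] {φ : ℝ → M → M} {S : Set M} {ε : ℝ}
    {a b : M} (ha : a ∈ S) (hb : b ∈ S) {t : ℝ} (ht : t ∈ Icc (1:ℝ) 2)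
    (hd : dist (φ t a) b < ε) : ChainIcc φ S ε a b := by
  refine ⟨1, fun i => if i = 0 then a else b, fun _ => t, le_refl _, by simp, by simp, ?_, ?_⟩
  · intro i _; by_cases h : i = 0 <;> simp [h, ha, hb]
  · intro i hi
    interval_cases i
    simpa using ⟨ht, hd⟩

lemma ChainIcc.trans {M : Type*} [MetricSpace M] {φ : ℝ → M → M} {S : Set M} {ε : ℝ}
    {a b c : M} (h1 : ChainIcc φ S ε a b) (h2 : ChainIcc φ S ε b c) : ChainIcc φ S ε a c := by
  obtain ⟨n1, xs1, ts1, hn1, hx10, hx1n, hmem1, hstep1⟩ := h1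
  obtain ⟨n2, xs2, ts2, hn2, hx20, hx2n, hmem2, hstep2⟩ := h2
  refine ⟨n1 + n2, fun i => if i ≤ n1 then xs1 i else xs2 (i - n1),
    fun i => if i < n1 then ts1 i else ts2 (i - n1), by omega, by simpa using hx10, ?_, ?_, ?_⟩
  · have : ¬ (n1 + n2 ≤ n1) := by omega
    simp only [this, if_false]
    simpa using hx2n
  · intro i hi
    by_cases h : i ≤ n1
    · simpa [h] using hmem1 i h
    · simp only [h, if_false]
      exact hmem2 (i - n1) (by omega)
  · intro i hi
    by_cases h : i < n1
    · have h1' : i ≤ n1 := h.le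
      have h2' : i + 1 ≤ n1 := by omega
      simpa [h, h1', h2'] using hstep1 i h
    · have h3 : ¬ (i + 1 ≤ n1) := by omega
      have h4 : i + 1 - n1 = (i - n1) + 1 := by omega
      by_cases h5 : i = n1
      · have h6 : i ≤ n1 := by omega
        have e1 : i - n1 = 0 := by omega
        simp only [h, if_false, h6, if_true, h3, h4, e1]
        rw [h5, hx1n, ← hx20]
        exact hstep2 0 (by omega)
      · have h6 : ¬ (i ≤ n1) := by omega
        simp only [h, if_false, h6, h3, if_false, h4]
        exact hstep2 (i - n1) (by omega)

lemma chainIcc_orbit {M : Type*} [MetricSpace M] {φ : ℝ → M → M}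
    (hφ0 : ∀ x, φ 0 x = x) (hφadd : ∀ s t x, φ (s + t) x = φ s (φ t x))
    {S : Set M} (hinv : ∀ t : ℝ, φ t '' S = S) {ε : ℝ} (hε : 0 < ε)
    {a b : M} (ha : a ∈ S) (hb : b ∈ S) {t : ℝ} (ht : 1 ≤ t)
    (hd : dist (φ t a) b < ε) : ChainIcc φ S ε a b := by
  have hmemS : ∀ (s : ℝ) (z : M), z ∈ S → φ s z ∈ S := by
    intro s z hz
    rw [← hinv s]
    exact mem_image_of_mem _ hz
  set m := ⌊t⌋₊ with hm
  have hm1 : 1 ≤ m := Nat.one_le_iff_ne_zero.2 (by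
    intro h
    have := Nat.floor_eq_zero.1 h
    linarith)
  have hmt : (m : ℝ) ≤ t := Nat.floor_le (by linarith)
  have hmt2 : t < m + 1 := Nat.lt_floor_add_one t
  have hmpos : (0:ℝ) < m := by exact_mod_cast hm1
  set τ := t / m with hτ
  have hτ1 : 1 ≤ τ := (one_le_div hmpos).2 hmt
  have hτ2 : τ ≤ 2 := by
    rw [hτ, div_le_iff₀ hmpos]
    have : (1:ℝ) ≤ m := by exact_mod_cast hm1
    linarith
  have hτIcc : τ ∈ Icc (1:ℝ) 2 := ⟨hτ1, hτ2⟩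
  have hmul : (m : ℝ) * τ = t := by
    rw [hτ]; field_simp
  -- chains along the orbit
  have horb : ∀ j : ℕ, 1 ≤ j → ChainIcc φ S ε a (φ (j * τ) a) := by
    intro j hj
    induction j with
    | zero => omega
    | succ k ih =>
      by_cases hk : 1 ≤ k
      · refine (ih hk).trans (ChainIcc.single (hmemS _ _ ha) (hmemS _ _ ha) hτIcc ?_)
        rw [← hφadd]
        have : τ + k * τ = ((k + 1 : ℕ) : ℝ) * τ := by push_cast; ring
        rw [this]
        simpa using hε
      · have hk0 : k = 0 := by omega
        subst hk0
        refine ChainIcc.single ha (hmemS _ _ ha) hτIcc ?_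
        have : ((0 + 1 : ℕ) : ℝ) * τ = τ := by push_cast; ring
        rw [this]
        simpa using hε
  by_cases hm2 : m = 1
  · have hteq : τ = t := by rw [hτ, hm2]; push_cast; rw [div_one]
    refine ChainIcc.single ha hb hτIcc ?_
    rw [hteq]; exact hd
  · have hm2' : 2 ≤ m := by omega
    refine (horb (m - 1) (by omega)).trans (ChainIcc.single (hmemS _ _ ha) hb hτIcc ?_)
    rw [← hφadd]
    have : τ + ((m - 1 : ℕ) : ℝ) * τ = (m : ℝ) * τ := by
      have : ((m - 1 : ℕ) : ℝ) = (m : ℝ) - 1 := by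
        push_cast [Nat.cast_sub hm1]; ring
      rw [this]; ring
    rw [this, hmul]
    exact hd
lemma chainTransitive_chainIcc {M : Type*} [MetricSpace M] {φ : ℝ → M → M}
    (hφ0 : ∀ x, φ 0 x = x) (hφadd : ∀ s t x, φ (s + t) x = φ s (φ t x))
    {S : Set M} (hcts : ChainTransitiveSet φ S) {ε : ℝ} (hε : 0 < ε)
    {a b : M} (ha : a ∈ S) (hb : b ∈ S) : ChainIcc φ S ε a b := by
  obtain ⟨n, xs, ts, hn, hx0, hxn, hmem, hstep⟩ := hcts.2.2 ε hε a ha b hb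
  have key : ∀ i : ℕ, 1 ≤ i → i ≤ n → ChainIcc φ S ε (xs 0) (xs i) := by
    intro i hi1 hin
    induction i with
    | zero => omega
    | succ k ih =>
      have step : ChainIcc φ S ε (xs k) (xs (k + 1)) :=
        chainIcc_orbit hφ0 hφadd hcts.2.1 hε (hmem k (by omega)) (hmem (k+1) (by omega))
          (hstep k (by omega)).1 (hstep k (by omega)).2
      by_cases hk1 : 1 ≤ k
      · exact (ih hk1 (by omega)).trans step
      · have : k = 0 := by omega
        rw [← this]
        exact step
  have := key n hn (le_refl _)
  rwa [hx0, hxn] at this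

/-- Upper semicontinuity of `(X, K) ↦ CR(X, K)`:
`limsup CR(Xₙ, Kₙ) ⊆ CR(X, K)` when `Xₙ → X` in `C¹` and `Kₙ → K` in Hausdorff metric. -/
theorem limsup_CRset_subset [FiniteDimensional ℝ V]
    (Xn : ℕ → V → V) (X : V → V) (hXn : ∀ n, ContDiff ℝ 1 (Xn n)) (hX : ContDiff ℝ 1 X)
    (φn : ℕ → ℝ → V → V) (φ : ℝ → V → V)
    (hφn : ∀ n, IsFlowOf (Xn n) (φn n)) (hφ : IsFlowOf X φ)
    (hC1 : TendstoC1 Xn X)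
    (Kn : ℕ → Set V) (K : Set V)
    (hKn : ∀ n, IsCompact (Kn n)) (hKnne : ∀ n, (Kn n).Nonempty)
    (hK : IsCompact K) (hKne : K.Nonempty)
    (hHaus : Tendsto (fun n => hausdorffDist (Kn n) K) atTop (nhds 0)) :
    ∀ x : V, (∃ ns : ℕ → ℕ, StrictMono ns ∧ ∃ xs : ℕ → V,
        (∀ k, xs k ∈ CRset (φn (ns k)) (Kn (ns k))) ∧ Tendsto xs atTop (nhds x)) →
      x ∈ CRset φ K := by
  rintro x ⟨ns, hns, xv, hxv, hxvx⟩
  choose Λf hsub hcts hmemx using hxv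
  -- a common ball containing all Kn (ns k) for large k, and K
  obtain ⟨r0, hr0⟩ := hK.isBounded.subset_closedBall (0:V)
  have hKedist : ∀ nn : ℕ, EMetric.hausdorffEdist (Kn nn) K ≠ ⊤ := fun nn =>
    hausdorffEdist_ne_top_of_nonempty_of_bounded (hKnne nn) hKne (hKn nn).isBounded hK.isBounded
  have hnsTop : Tendsto ns atTop atTop := hns.tendsto_atTop
  have hHausNs : Tendsto (fun k => hausdorffDist (Kn (ns k)) K) atTop (nhds 0) :=
    hHaus.comp hnsTop
  obtain ⟨N0, hN0⟩ := eventually_atTop.1 (hHausNs.eventually (gt_mem_nhds one_pos))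
  set r1 := r0 + 1 with hr1def
  have hcontain : ∀ k, N0 ≤ k → Kn (ns k) ⊆ closedBall (0:V) r1 := by
    intro k hk z hz
    obtain ⟨w, hwK, hwd⟩ := exists_dist_lt_of_hausdorffDist_lt hz (hN0 k hk) (hKedist (ns k))
    have : dist w 0 ≤ r0 := by simpa [mem_closedBall] using hr0 hwK
    rw [mem_closedBall]
    calc dist z 0 ≤ dist z w + dist w 0 := dist_triangle _ _ _
      _ ≤ r1 := by rw [hr1def]; linarith
  -- compact subsets of the ball as a compact space
  haveI hMc : CompactSpace (closedBall (0:V) r1) :=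
    isCompact_iff_compactSpace.1 (isCompact_closedBall _ _)
  have hΛM : ∀ k, Λf (k + N0) ⊆ closedBall (0:V) r1 := fun k =>
    (hsub (k + N0)).trans (hcontain (k + N0) (by omega))
  let F : ℕ → TopologicalSpace.NonemptyCompacts (closedBall (0:V) r1) := fun k =>
    ⟨⟨Subtype.val ⁻¹' (Λf (k + N0)),
      (IsClosed.preimage continuous_subtype_val ((hcts (k + N0)).1.isClosed)).isCompact⟩,
      ⟨⟨xv (k + N0), hΛM k (hmemx (k + N0))⟩, hmemx (k + N0)⟩⟩
  obtain ⟨KK, -, sk, hsk, hKKtend⟩ := isCompact_univ.tendsto_subseq (fun k => mem_univ (F k))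
  set Λ : Set V := Subtype.val '' (KK : Set (closedBall (0:V) r1)) with hΛdef
  set m : ℕ → ℕ := fun j => sk j + N0 with hmdef
  have hmTop : Tendsto (fun j => ns (m j)) atTop atTop :=
    hnsTop.comp ((tendsto_add_atTop_nat N0).comp hsk.tendsto_atTop)
  -- Hausdorff convergence of the Λf (m j) to Λ
  have hHD : ∀ ρ > (0:ℝ), ∀ᶠ j in atTop,
      hausdorffDist ((F (sk j) : Set (closedBall (0:V) r1))) (KK : Set (closedBall (0:V) r1)) < ρ := by
    intro ρ hρ
    have h2 : Tendsto (fun j => dist (F (sk j)) KK) atTop (nhds 0) :=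
      tendsto_iff_dist_tendsto_zero.1 hKKtend
    exact (h2.eventually (gt_mem_nhds hρ)).mono fun j hj => by
      rwa [NonemptyCompacts.dist_eq] at hj
  have hedist : ∀ j : ℕ, EMetric.hausdorffEdist ((F (sk j) : Set (closedBall (0:V) r1)))
      (KK : Set (closedBall (0:V) r1)) ≠ ⊤ := fun j =>
    hausdorffEdist_ne_top_of_nonempty_of_bounded (F (sk j)).nonempty KK.nonempty
      (F (sk j)).isCompact.isBounded KK.isCompact.isBounded
  have hP : ∀ ρ > (0:ℝ), ∀ᶠ j in atTop, ∀ y ∈ Λ, ∃ z ∈ Λf (m j), dist y z < ρ := by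
    intro ρ hρ
    refine (hHD ρ hρ).mono fun j hj y hy => ?_
    obtain ⟨yh, hyh, rfl⟩ := hy
    obtain ⟨zh, hzh, hzd⟩ := exists_dist_lt_of_hausdorffDist_lt' hyh hj (hedist j)
    exact ⟨zh.1, hzh, by rw [dist_comm] at hzd; exact_mod_cast hzd⟩
  have hQ : ∀ ρ > (0:ℝ), ∀ᶠ j in atTop, ∀ z ∈ Λf (m j), ∃ y ∈ Λ, dist z y < ρ := by
    intro ρ hρ
    refine (hHD ρ hρ).mono fun j hj z hz => ?_
    have hzM : z ∈ closedBall (0:V) r1 := hΛM (sk j) hz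
    obtain ⟨yh, hyh, hyd⟩ := exists_dist_lt_of_hausdorffDist_lt (show (⟨z, hzM⟩ : closedBall (0:V) r1) ∈ (F (sk j) : Set _) from hz) hj (hedist j)
    exact ⟨yh.1, ⟨yh, hyh, rfl⟩, by exact_mod_cast hyd⟩
  -- basic properties of Λ
  have hΛcomp : IsCompact Λ := KK.isCompact.image continuous_subtype_val
  have hΛclosed : IsClosed Λ := hΛcomp.isClosed
  have hxΛ : x ∈ Λ := by
    rw [← hΛclosed.closure_eq, Metric.mem_closure_iff]
    intro ρ hρ
    have hxseq : Tendsto (fun j => xv (m j)) atTop (nhds x) :=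
      hxvx.comp ((tendsto_add_atTop_nat N0).comp hsk.tendsto_atTop)
    have h1 : ∀ᶠ j in atTop, xv (m j) ∈ ball x (ρ / 2) :=
      hxseq (ball_mem_nhds x (half_pos hρ))
    obtain ⟨j, hj1, hj2⟩ := (h1.and (hQ (ρ / 2) (half_pos hρ))).exists
    obtain ⟨y, hyΛ, hyd⟩ := hj2 (xv (m j)) (hmemx (m j))
    refine ⟨y, hyΛ, ?_⟩
    calc dist x y ≤ dist x (xv (m j)) + dist (xv (m j)) y := dist_triangle _ _ _
      _ < ρ := by
        have h3 : dist x (xv (m j)) < ρ / 2 := by rw [dist_comm]; exact mem_ball.1 hj1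
        linarith
  have hΛK : Λ ⊆ K := by
    intro y hy
    rw [← hK.isClosed.closure_eq, Metric.mem_closure_iff]
    intro ρ hρ
    have h1 : ∀ᶠ j in atTop, hausdorffDist (Kn (ns (m j))) K < ρ / 2 :=
      (hHaus.comp hmTop).eventually (gt_mem_nhds (half_pos hρ))
    obtain ⟨j, hj1, hj2⟩ := ((hP (ρ / 2) (half_pos hρ)).and h1).exists
    obtain ⟨z, hzmem, hzd⟩ := hj1 y hy
    obtain ⟨w, hwK, hwd⟩ := exists_dist_lt_of_hausdorffDist_lt (hsub (m j) hzmem) hj2 (hKedist _)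
    exact ⟨w, hwK, by calc dist y w ≤ dist y z + dist z w := dist_triangle _ _ _
      _ < ρ := by linarith⟩
  -- uniform approximation of vector fields along the subsequence
  have hsup : ∀ ε' > (0:ℝ), ∀ᶠ j in atTop, ∀ u, dist (Xn (ns (m j)) u) (X u) ≤ ε' := by
    intro ε' hε'
    have h1 := Metric.tendstoUniformly_iff.1 hC1.1 ε' hε'
    exact (hmTop.eventually h1).mono fun j hj u => le_of_lt (by rw [dist_comm]; exact hj u)
  -- the two instances of the uniform flow comparison
  have hU : ∀ ζ : ℝ, 0 < ζ → ∃ δ > (0:ℝ), ∃ ε' > (0:ℝ), ∀ Y : V → V,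
      (∀ u, dist (Y u) (X u) ≤ ε') → ∀ ψ : ℝ → V, (∀ s, HasDerivAt ψ (Y (ψ s)) s) →
      ∀ y ∈ Λ, dist (ψ 0) y ≤ δ → ∀ s ∈ Icc (0:ℝ) 2, dist (ψ s) (φ s y) ≤ ζ :=
    fun ζ hζ => uniform_flow_compare hX hφ.1 hφ.2.2 hΛcomp hζ
  have hUr : ∀ ζ : ℝ, 0 < ζ → ∃ δ > (0:ℝ), ∃ ε' > (0:ℝ), ∀ Y : V → V,
      (∀ u, dist (Y u) ((fun u => -X u) u) ≤ ε') → ∀ ψ : ℝ → V, (∀ s, HasDerivAt ψ (Y (ψ s)) s) →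
      ∀ y ∈ Λ, dist (ψ 0) y ≤ δ → ∀ s ∈ Icc (0:ℝ) 2, dist (ψ s) (φ (-s) y) ≤ ζ :=
    fun ζ hζ => uniform_flow_compare (X := fun u => -X u) (φ := fun t x => φ (-t) x) hX.neg
      (fun x => by simpa using hφ.1 x)
      (fun x t => by simpa [Function.comp_def] using ((hφ.2.2 x (-t)).scomp t (hasDerivAt_neg t)))
      hΛcomp hζ
  -- flow invariance of Λ for small nonnegative times, forward and backward
  have hmap2 : ∀ t ∈ Icc (0:ℝ) 2, ∀ y ∈ Λ, φ t y ∈ Λ := by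
    intro t htIcc y hy
    rw [← hΛclosed.closure_eq, Metric.mem_closure_iff]
    intro ρ hρ
    obtain ⟨δ, hδ, ε', hε', HU⟩ := hU (ρ / 2) (half_pos hρ)
    obtain ⟨j, hjP, hjQ, hjsup⟩ :=
      ((hP δ hδ).and ((hQ (ρ / 2) (half_pos hρ)).and (hsup ε' hε'))).exists
    obtain ⟨z, hzmem, hzd⟩ := hjP y hy
    have hw' : φn (ns (m j)) t z ∈ Λf (m j) := by
      rw [← (hcts (m j)).2.1 t]; exact mem_image_of_mem _ hzmem
    have hcompare : dist (φn (ns (m j)) t z) (φ t y) ≤ ρ / 2 := by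
      refine HU (Xn (ns (m j))) hjsup (fun s => φn (ns (m j)) s z)
        (fun s => (hφn (ns (m j))).2.2 z s) y hy ?_ t htIcc
      show dist (φn (ns (m j)) 0 z) y ≤ δ
      rw [(hφn (ns (m j))).1, dist_comm]
      exact hzd.le
    obtain ⟨w, hwΛ, hwd⟩ := hjQ _ hw'
    exact ⟨w, hwΛ, by calc dist (φ t y) w ≤ dist (φ t y) (φn (ns (m j)) t z) + dist (φn (ns (m j)) t z) w := dist_triangle _ _ _
      _ < ρ := by rw [dist_comm (φ t y)] at *; linarith⟩
  have hmap2' : ∀ t ∈ Icc (0:ℝ) 2, ∀ y ∈ Λ, φ (-t) y ∈ Λ := by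
    intro t htIcc y hy
    rw [← hΛclosed.closure_eq, Metric.mem_closure_iff]
    intro ρ hρ
    obtain ⟨δ, hδ, ε', hε', HU⟩ := hUr (ρ / 2) (half_pos hρ)
    obtain ⟨j, hjP, hjQ, hjsup⟩ :=
      ((hP δ hδ).and ((hQ (ρ / 2) (half_pos hρ)).and (hsup ε' hε'))).exists
    obtain ⟨z, hzmem, hzd⟩ := hjP y hy
    have hw' : φn (ns (m j)) (-t) z ∈ Λf (m j) := by
      rw [← (hcts (m j)).2.1 (-t)]; exact mem_image_of_mem _ hzmem
    have hcompare : dist (φn (ns (m j)) (-t) z) (φ (-t) y) ≤ ρ / 2 := by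
      refine HU (fun u => -(Xn (ns (m j)) u)) (fun u => by simpa [dist_neg_neg] using hjsup u)
        (fun s => φn (ns (m j)) (-s) z)
        (fun s => by simpa [Function.comp_def] using (((hφn (ns (m j))).2.2 z (-s)).scomp s (hasDerivAt_neg s)))
        y hy ?_ t htIcc
      show dist (φn (ns (m j)) (-0) z) y ≤ δ
      rw [neg_zero, (hφn (ns (m j))).1, dist_comm]
      exact hzd.le
    obtain ⟨w, hwΛ, hwd⟩ := hjQ _ hw'
    exact ⟨w, hwΛ, by calc dist (φ (-t) y) w ≤ dist (φ (-t) y) (φn (ns (m j)) (-t) z) + dist (φn (ns (m j)) (-t) z) w := dist_triangle _ _ _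
      _ < ρ := by rw [dist_comm (φ (-t) y)] at *; linarith⟩
  -- full invariance
  have hmapNat : ∀ nn : ℕ, ∀ t ∈ Icc (0:ℝ) (nn : ℝ), ∀ y ∈ Λ, φ t y ∈ Λ := by
    intro nn
    induction nn with
    | zero =>
      intro t ht y hy
      have h0 : t = 0 := le_antisymm (by exact_mod_cast ht.2) ht.1
      rw [h0, hφ.1]; exact hy
    | succ k ih =>
      intro t ht y hy
      by_cases h : t ≤ (k : ℝ)
      · exact ih t ⟨ht.1, h⟩ y hy
      · have harg : (t - (k:ℝ)) + (k:ℝ) = t := by ring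
        have h1 : φ t y = φ (t - (k:ℝ)) (φ (k:ℝ) y) := by
          conv_lhs => rw [← harg]
          rw [hφ.2.1]
        rw [h1]
        have hk : φ (k:ℝ) y ∈ Λ := ih (k:ℝ) ⟨Nat.cast_nonneg k, le_refl _⟩ y hy
        refine hmap2 (t - (k:ℝ)) ⟨by linarith [not_le.1 h], ?_⟩ _ hk
        have := ht.2
        push_cast at this
        linarith
  have hmapNat' : ∀ nn : ℕ, ∀ t ∈ Icc (0:ℝ) (nn : ℝ), ∀ y ∈ Λ, φ (-t) y ∈ Λ := by
    intro nn
    induction nn with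
    | zero =>
      intro t ht y hy
      have h0 : t = 0 := le_antisymm (by exact_mod_cast ht.2) ht.1
      rw [h0]; simpa [hφ.1] using hy
    | succ k ih =>
      intro t ht y hy
      by_cases h : t ≤ (k : ℝ)
      · exact ih t ⟨ht.1, h⟩ y hy
      · have harg : (-(t - (k:ℝ))) + (-(k:ℝ)) = -t := by ring
        have h1 : φ (-t) y = φ (-(t - (k:ℝ))) (φ (-(k:ℝ)) y) := by
          conv_lhs => rw [← harg]
          rw [hφ.2.1]
        rw [h1]
        have hk : φ (-(k:ℝ)) y ∈ Λ := ih (k:ℝ) ⟨Nat.cast_nonneg k, le_refl _⟩ y hy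
        refine hmap2' (t - (k:ℝ)) ⟨by linarith [not_le.1 h], ?_⟩ _ hk
        have := ht.2
        push_cast at this
        linarith
  have hmapAll : ∀ t : ℝ, ∀ y ∈ Λ, φ t y ∈ Λ := by
    intro t y hy
    rcases le_total 0 t with h | h
    · exact hmapNat ⌈t⌉₊ t ⟨h, Nat.le_ceil t⟩ y hy
    · have h1 : φ t y = φ (-(-t)) y := by rw [neg_neg]
      rw [h1]
      exact hmapNat' ⌈-t⌉₊ (-t) ⟨by linarith, Nat.le_ceil _⟩ y hy
  have hinv : ∀ t : ℝ, φ t '' Λ = Λ := by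
    intro t
    apply Subset.antisymm
    · rintro _ ⟨y, hy, rfl⟩
      exact hmapAll t y hy
    · intro y hy
      refine ⟨φ (-t) y, hmapAll (-t) y hy, ?_⟩
      rw [← hφ.2.1]
      simp [hφ.1]
  -- chain transitivity
  have hchain : ∀ ε > (0:ℝ), ∀ p ∈ Λ, ∀ q ∈ Λ, ChainIcc φ Λ ε p q := by
    intro ε hε p hp q hq
    set ζ := ε / 4 with hζdef
    have hζ : 0 < ζ := by positivity
    obtain ⟨δ, hδ, ε', hε', HU⟩ := hU ζ hζ
    set δ1 := min δ ζ with hδ1def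
    have hδ1 : 0 < δ1 := lt_min hδ hζ
    obtain ⟨j, hjP, hjQ, hjsup⟩ := ((hP δ1 hδ1).and ((hQ δ1 hδ1).and (hsup ε' hε'))).exists
    obtain ⟨zp, hzp, hzpd⟩ := hjP p hp
    obtain ⟨zq, hzq, hzqd⟩ := hjP q hq
    have hchain0 : ChainIcc (φn (ns (m j))) (Λf (m j)) ζ zp zq :=
      chainTransitive_chainIcc (hφn (ns (m j))).1 (hφn (ns (m j))).2.1 (hcts (m j)) hζ hzp hzq
    obtain ⟨n, cs, ts, hn, hc0, hcn, hcmem, hcstep⟩ := hchain0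
    have hcex : ∀ z : V, ∃ w : V, z ∈ Λf (m j) → w ∈ Λ ∧ dist z w < δ1 := by
      intro z
      by_cases hz : z ∈ Λf (m j)
      · obtain ⟨w, hw1, hw2⟩ := hjQ z hz
        exact ⟨w, fun _ => ⟨hw1, hw2⟩⟩
      · exact ⟨p, fun h => absurd h hz⟩
    choose cΛ hcΛ using hcex
    refine ⟨n, fun i => if i = 0 then p else if i = n then q else cΛ (cs i), ts, hn, by simp, ?_, ?_, ?_⟩
    · have hne : ¬ (n = 0) := by omega
      simp [hne]
    · intro i hi
      by_cases h0 : i = 0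
      · simpa [h0] using hp
      · by_cases h1 : i = n
        · have hn0 : ¬ (n = 0) := by omega
          simp [h0, h1, hn0, hq]
        · simpa [h0, h1] using (hcΛ (cs i) (hcmem i hi)).1
    · intro i hi
      refine ⟨(hcstep i hi).1, ?_⟩
      have hiter : ∀ i' : ℕ, i' ≤ n →
          ((if i' = 0 then p else if i' = n then q else cΛ (cs i')) ∈ Λ ∧
            dist (cs i') (if i' = 0 then p else if i' = n then q else cΛ (cs i')) ≤ δ1) := by
        intro i' hi'
        by_cases h0 : i' = 0
        · subst h0
          simp only [if_pos rfl]
          exact ⟨hp, by rw [hc0, dist_comm]; exact hzpd.le⟩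
        · by_cases h1 : i' = n
          · subst h1
            simp only [h0, if_false, if_pos rfl]
            exact ⟨hq, by rw [hcn, dist_comm]; exact hzqd.le⟩
          · simp only [h0, h1, if_false]
            exact ⟨(hcΛ _ (hcmem i' hi')).1, (hcΛ _ (hcmem i' hi')).2.le⟩
      obtain ⟨huΛ, hud⟩ := hiter i hi.le
      obtain ⟨hvΛ, hvd⟩ := hiter (i + 1) (by omega)
      have hcompare : dist (φn (ns (m j)) (ts i) (cs i))
          (φ (ts i) (if i = 0 then p else if i = n then q else cΛ (cs i))) ≤ ζ := by
        refine HU (Xn (ns (m j))) hjsup (fun s => φn (ns (m j)) s (cs i))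
          (fun s => (hφn (ns (m j))).2.2 (cs i) s) _ huΛ ?_ (ts i)
          ⟨le_trans zero_le_one (hcstep i hi).1.1, (hcstep i hi).1.2⟩
        show dist (φn (ns (m j)) 0 (cs i)) _ ≤ δ
        rw [(hφn (ns (m j))).1]
        exact le_trans hud (min_le_left _ _)
      have hjump := (hcstep i hi).2
      calc dist (φ (ts i) (if i = 0 then p else if i = n then q else cΛ (cs i)))
            (if i + 1 = 0 then p else if i + 1 = n then q else cΛ (cs (i + 1)))
          ≤ dist (φ (ts i) (if i = 0 then p else if i = n then q else cΛ (cs i)))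
              (φn (ns (m j)) (ts i) (cs i))
            + dist (φn (ns (m j)) (ts i) (cs i)) (cs (i + 1))
            + dist (cs (i + 1)) (if i + 1 = 0 then p else if i + 1 = n then q else cΛ (cs (i + 1))) :=
            dist_triangle4 _ _ _ _
        _ ≤ ζ + dist (φn (ns (m j)) (ts i) (cs i)) (cs (i + 1)) + δ1 := by
            rw [dist_comm (φ (ts i) _)]
            exact add_le_add (add_le_add_left hcompare _) hvd
        _ < ζ + ζ + δ1 := by linarith [hjump]
        _ ≤ ε := by
            have h1 : δ1 ≤ ζ := min_le_right _ _
            rw [hζdef] at *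
            linarith
  -- conclusion
  refine ⟨Λ, hΛK, ⟨hΛcomp, hinv, ?_⟩, hxΛ⟩
  intro ε hε p hp q hq
  obtain ⟨n, cs, ts, hn, h0, h1, hmem, hstep⟩ := hchain ε hε p hp q hq
  exact ⟨n, cs, ts, hn, h0, h1, hmem, fun i hi => ⟨(hstep i hi).1.1, (hstep i hi).2⟩⟩
end

section
/- If CR(X, K) = ∅ for a C¹ vector field X and compact set K, then there exist a C¹ neighborhood 𝒰 of X and an open neighborhood U of K such that CR(Y, closure(U)) = ∅ for all Y ∈ 𝒰. -/
open Set Metric Filter Module Real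
open scoped NNReal Topology

variable {V : Type*} [NormedAddCommGroup V] [NormedSpace ℝ V]

lemma gronwallBound_mono_x {δ K ε : ℝ} (hδ : 0 ≤ δ) (hK : 0 < K) (hε : 0 ≤ ε) {x y : ℝ}
    (hx : 0 ≤ x) (hxy : x ≤ y) : gronwallBound δ K ε x ≤ gronwallBound δ K ε y := by
  simp only [gronwallBound_of_K_ne_0 hK.ne']
  have h1 : exp (K * x) ≤ exp (K * y) := exp_le_exp.2 (by nlinarith)
  have h2 : (0:ℝ) < exp (K * x) := exp_pos _
  have hεK : 0 ≤ ε / K := div_nonneg hε hK.le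
  nlinarith

lemma IsFlowOf.neg {X : V → V} {φ : ℝ → V → V} (hφ : IsFlowOf X φ) :
    IsFlowOf (fun z => -X z) (fun t z => φ (-t) z) := by
  refine ⟨fun x => by simpa using hφ.1 x, fun s t x => by show φ (-(s+t)) x = _; rw [neg_add]; exact hφ.2.1 _ _ _,
    fun x t => ?_⟩
  have h := hφ.2.2 x (-t)
  have hneg : HasDerivAt (fun s : ℝ => -s) (-1) t := (hasDerivAt_id t).neg
  have h2 := HasDerivAt.scomp (g₁ := fun s => φ s x) t h hneg
  simpa [Function.comp_def] using h2

/-- Core continuation/Grönwall comparison lemma: an approximate trajectory `f` staying near `K`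
and another approximate trajectory `g` starting close to `f` remain close, as long as the
Grönwall bound stays below `1`. -/
lemma dist_le_of_approx_flow (X : V → V) {K : Set V} (hK : IsCompact K) (hKne : K.Nonempty)
    {R : ℝ} (hKR : ∀ z ∈ K, ‖z‖ ≤ R)
    {L : ℝ≥0} (hL : 0 < (L : ℝ))
    (hlip : LipschitzOnWith L X (closedBall 0 (R + 3)))
    {f g F G : ℝ → V} {εf εg T : ℝ} (hεf : 0 ≤ εf) (hεg : 0 ≤ εg) (hT : 0 ≤ T)
    (hf : ∀ u ∈ Icc 0 T, HasDerivAt f (F u) u)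
    (hfX : ∀ u ∈ Icc 0 T, ‖F u - X (f u)‖ ≤ εf)
    (hfK : ∀ u ∈ Icc 0 T, infDist (f u) K ≤ 1)
    (hg : ∀ u ∈ Icc 0 T, HasDerivAt g (G u) u)
    (hgX : ∀ u ∈ Icc 0 T, ‖G u - X (g u)‖ ≤ εg)
    (hsmall : gronwallBound (dist (f 0) (g 0)) L (εf + εg) T < 1) :
    dist (f T) (g T) ≤ gronwallBound (dist (f 0) (g 0)) L (εf + εg) T := by
  set δ0 := dist (f 0) (g 0) with hδ0def
  set D := gronwallBound δ0 L (εf + εg) T with hDdef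
  have hε : 0 ≤ εf + εg := add_nonneg hεf hεg
  have hδ0 : 0 ≤ δ0 := dist_nonneg
  have hmono : ∀ u, 0 ≤ u → u ≤ T → gronwallBound δ0 L (εf + εg) u ≤ D :=
    fun u hu huT => gronwallBound_mono_x hδ0 hL hε hu huT
  have hD0 : δ0 ≤ D := by
    have := hmono 0 le_rfl hT
    rwa [gronwallBound_x0] at this
  have hD1 : D < 1 := hsmall
  -- norm bounds from infDist
  have hnorm : ∀ z : V, infDist z K ≤ 2 → z ∈ closedBall (0 : V) (R + 3) := by
    intro z hz
    obtain ⟨y, hyK, hy⟩ := hK.exists_infDist_eq_dist hKne z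
    have h1 : dist z y ≤ 2 := by rw [← hy]; exact hz
    have h2 : ‖y‖ ≤ R := hKR y hyK
    have : ‖z‖ ≤ R + 2 := by
      calc ‖z‖ = dist z 0 := (dist_zero_right z).symm
      _ ≤ dist z y + dist y 0 := dist_triangle _ _ _
      _ ≤ 2 + R := by rw [dist_zero_right]; exact add_le_add h1 h2
      _ = R + 2 := by ring
    simp only [mem_closedBall, dist_zero_right]
    linarith
  set A := {b | b ∈ Icc 0 T ∧ ∀ w ∈ Icc (0:ℝ) b, dist (f w) (g w) ≤ D} with hAdef
  have h0A : (0:ℝ) ∈ A := by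
    refine ⟨⟨le_rfl, hT⟩, fun w hw => ?_⟩
    have : w = 0 := le_antisymm hw.2 hw.1
    rw [this]; exact hD0
  have hAne : A.Nonempty := ⟨0, h0A⟩
  have hAbdd : BddAbove A := ⟨T, fun b hb => hb.1.2⟩
  set τ := sSup A with hτdef
  have hτ0 : 0 ≤ τ := le_csSup hAbdd h0A
  have hτT : τ ≤ T := csSup_le hAne fun b hb => hb.1.2
  have hfc : ∀ u ∈ Icc 0 T, ContinuousAt f u := fun u hu => (hf u hu).continuousAt
  have hgc : ∀ u ∈ Icc 0 T, ContinuousAt g u := fun u hu => (hg u hu).continuousAt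
  have hIco : ∀ w ∈ Ico (0:ℝ) τ, dist (f w) (g w) ≤ D := by
    intro w hw
    obtain ⟨b, hbA, hwb⟩ := exists_lt_of_lt_csSup hAne hw.2
    exact hbA.2 w ⟨hw.1, hwb.le⟩
  have hτA : τ ∈ A := by
    refine ⟨⟨hτ0, hτT⟩, fun w hw => ?_⟩
    rcases lt_or_eq_of_le hw.2 with hlt | heq
    · exact hIco w ⟨hw.1, hlt⟩
    · subst heq
      rcases eq_or_lt_of_le hτ0 with h0 | h0
    -- τ = 0 case (then w = τ = 0)
      · rw [← h0]; exact h0A.2 _ ⟨le_rfl, le_rfl⟩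
      · -- use continuity from the left
        have hcont : ContinuousAt (fun u => dist (f u) (g u)) τ :=
          Filter.Tendsto.dist (hfc τ ⟨hτ0, hτT⟩) (hgc τ ⟨hτ0, hτT⟩)
        have htend : Tendsto (fun u => dist (f u) (g u)) (𝓝[<] τ) (𝓝 (dist (f τ) (g τ))) :=
          hcont.continuousWithinAt.tendsto
        have : NeBot (𝓝[<] τ) := nhdsWithin_Iio_self_neBot' ⟨0, h0⟩
        refine le_of_tendsto htend ?_
        filter_upwards [Ioo_mem_nhdsLT_of_mem (Set.mem_Ioc.2 ⟨h0, le_rfl⟩)] with u hu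
        exact hIco u ⟨hu.1.le, hu.2⟩
  have hτeq : τ = T := by
    by_contra hne
    have hτltT : τ < T := lt_of_le_of_ne hτT hne
    -- infDist bound at points up to τ
    have hIccD : ∀ w ∈ Icc (0:ℝ) τ, infDist (g w) K ≤ 1 + D := by
      intro w hw
      have h1 : infDist (g w) K ≤ infDist (f w) K + dist (g w) (f w) :=
        infDist_le_infDist_add_dist
      have h2 := hfK w ⟨hw.1, hw.2.trans hτT⟩
      have h3 : dist (g w) (f w) ≤ D := by rw [dist_comm]; exact hτA.2 w hw
      linarith
    -- continuity of infDist along g at τ gives a margin to the right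
    have hcont : ContinuousAt (fun u => infDist (g u) K) τ :=
      (continuous_infDist_pt (s := K)).continuousAt.comp (hgc τ ⟨hτ0, hτT⟩)
    have hval : infDist (g τ) K < 2 := by
      have := hIccD τ ⟨hτ0, le_rfl⟩
      linarith
    have hev : ∀ᶠ u in 𝓝 τ, infDist (g u) K < 2 := hcont (Iio_mem_nhds hval)
    obtain ⟨η, hη, hball⟩ := Metric.eventually_nhds_iff.1 hev
    set b := min (τ + η / 2) T with hbdef
    have hτb : τ < b := lt_min (by linarith) hτltT
    have hbT : b ≤ T := min_le_right _ _
    have hb0 : 0 ≤ b := hτ0.trans hτb.le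
    have hgS : ∀ w ∈ Icc (0:ℝ) b, infDist (g w) K ≤ 2 := by
      intro w hw
      rcases le_or_gt w τ with h | h
      · have := hIccD w ⟨hw.1, h⟩; linarith
      · have hwb : w ≤ τ + η / 2 := hw.2.trans (min_le_left _ _)
        have : dist w τ < η := by
          rw [Real.dist_eq, abs_lt]; constructor <;> linarith
        exact (hball this).le
    have hfS : ∀ w ∈ Icc (0:ℝ) b, f w ∈ closedBall (0:V) (R + 3) := by
      intro w hw
      exact hnorm _ ((hfK w ⟨hw.1, hw.2.trans hbT⟩).trans (by norm_num))
    have hgS' : ∀ w ∈ Icc (0:ℝ) b, g w ∈ closedBall (0:V) (R + 3) := fun w hw =>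
      hnorm _ (hgS w hw)
    have key := dist_le_of_approx_trajectories_ODE_of_mem
      (v := fun _ : ℝ => X) (s := fun _ : ℝ => closedBall (0:V) (R + 3)) (K := L)
      (fun _ _ => hlip)
      (fun u hu => (hfc u ⟨hu.1, hu.2.trans hbT⟩).continuousWithinAt)
      (fun u hu => (hf u ⟨hu.1, hu.2.le.trans hbT⟩).hasDerivWithinAt)
      (fun u hu => by rw [dist_eq_norm]; exact hfX u ⟨hu.1, hu.2.le.trans hbT⟩)
      (fun u hu => hfS u ⟨hu.1, hu.2.le⟩)
      (fun u hu => (hgc u ⟨hu.1, hu.2.trans hbT⟩).continuousWithinAt)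
      (fun u hu => (hg u ⟨hu.1, hu.2.le.trans hbT⟩).hasDerivWithinAt)
      (fun u hu => by rw [dist_eq_norm]; exact hgX u ⟨hu.1, hu.2.le.trans hbT⟩)
      (fun u hu => hgS' u ⟨hu.1, hu.2.le⟩)
      (le_refl δ0)
    have hbA : b ∈ A := by
      refine ⟨⟨hb0, hbT⟩, fun w hw => ?_⟩
      have := key w hw
      rw [sub_zero] at this
      exact this.trans (hmono w hw.1 (hw.2.trans hbT))
    exact absurd (le_csSup hAbdd hbA) (not_le.2 hτb)
  have := hτA.2 T ⟨hT, hτeq.ge⟩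
  exact this

lemma dist_flow_le (X : V → V) {K : Set V} (hK : IsCompact K) (hKne : K.Nonempty)
    {R : ℝ} (hKR : ∀ z ∈ K, ‖z‖ ≤ R) {L : ℝ≥0} (hL : 0 < (L : ℝ))
    (hlip : LipschitzOnWith L X (closedBall 0 (R + 3)))
    {φ : ℝ → V → V} (hφ : IsFlowOf X φ) {z w : V} {T : ℝ} (hT : 0 ≤ T)
    (hzK : ∀ u ∈ Icc (0:ℝ) T, φ u z ∈ K)
    (hsmall : dist z w * exp ((L:ℝ) * T) < 1) :
    dist (φ T z) (φ T w) ≤ dist z w * exp ((L:ℝ) * T) := by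
  have hgb : gronwallBound (dist (φ 0 z) (φ 0 w)) (L:ℝ) (0 + 0) T
      = dist z w * exp ((L:ℝ) * T) := by
    rw [hφ.1, hφ.1, add_zero, gronwallBound_ε0]
  have := dist_le_of_approx_flow X hK hKne hKR hL hlip le_rfl le_rfl hT
    (f := fun u => φ u z) (F := fun u => X (φ u z))
    (g := fun u => φ u w) (G := fun u => X (φ u w))
    (fun u _ => hφ.2.2 z u) (fun u _ => by simp)
    (fun u hu => (infDist_zero_of_mem (hzK u hu)).le.trans zero_le_one)
    (fun u _ => hφ.2.2 w u) (fun u _ => by simp)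
    (by rw [hgb]; exact hsmall)
  rwa [hgb] at this

lemma tendsto_flow_aux (X : V → V) {K : Set V} (hK : IsCompact K) (hKne : K.Nonempty)
    {R : ℝ} (hKR : ∀ z ∈ K, ‖z‖ ≤ R) {L : ℝ≥0} (hL : 0 < (L : ℝ))
    (hlip : LipschitzOnWith L X (closedBall 0 (R + 3)))
    {φ : ℝ → V → V} (hφ : IsFlowOf X φ) {z : V} {w : ℕ → V} {T : ℝ} (hT : 0 ≤ T)
    (hwK : ∀ k, ∀ u ∈ Icc (0:ℝ) T, φ u (w k) ∈ K)
    (hwz : Tendsto w atTop (𝓝 z)) :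
    Tendsto (fun k => φ T (w k)) atTop (𝓝 (φ T z)) := by
  rw [Metric.tendsto_atTop]
  intro ε hε
  have hE : (0:ℝ) < exp ((L:ℝ) * T) := exp_pos _
  have hc : 0 < min ε 1 / exp ((L:ℝ) * T) := by positivity
  obtain ⟨N, hN⟩ := Metric.tendsto_atTop.1 hwz _ hc
  refine ⟨N, fun k hk => ?_⟩
  have h1 : dist (w k) z * exp ((L:ℝ) * T) < min ε 1 := by
    have := hN k hk
    calc dist (w k) z * exp ((L:ℝ) * T) < (min ε 1 / exp ((L:ℝ) * T)) * exp ((L:ℝ) * T) :=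
          mul_lt_mul_of_pos_right this hE
    _ = min ε 1 := div_mul_cancel₀ _ hE.ne'
  have h2 := dist_flow_le X hK hKne hKR hL hlip hφ hT (hwK k)
    (h1.trans_le (min_le_right _ _))
  exact lt_of_le_of_lt h2 (h1.trans_le (min_le_left _ _))

lemma flow_limit_mem (X : V → V) {K : Set V} (hK : IsCompact K) (hKne : K.Nonempty)
    {R : ℝ} (hKR : ∀ z ∈ K, ‖z‖ ≤ R) {L : ℝ≥0} (hL : 0 < (L : ℝ))
    (hlip : LipschitzOnWith L X (closedBall 0 (R + 3)))
    {φ : ℝ → V → V} (hφ : IsFlowOf X φ)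
    {Y : ℕ → V → V} {ψ : ℕ → ℝ → V → V} (hψ : ∀ n, IsFlowOf (Y n) (ψ n))
    {εs : ℕ → ℝ} (hεs0 : ∀ n, 0 ≤ εs n) (hεs1 : ∀ n, εs n ≤ 1)
    (hεst : Tendsto εs atTop (𝓝 0))
    (hYX : ∀ n z, ‖Y n z - X z‖ ≤ εs n)
    {q : ℕ → V} {x : V} (hq : Tendsto q atTop (𝓝 x)) {T : ℝ} (hT : 0 ≤ T)
    (hqK : ∀ n, ∀ u ∈ Icc (0:ℝ) T, infDist (ψ n u (q n)) K ≤ εs n) :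
    φ T x ∈ K := by
  have hgb : ∀ n, gronwallBound (dist (q n) x) (L:ℝ) (εs n + 0) T
      = dist (q n) x * exp ((L:ℝ) * T) + εs n / (L:ℝ) * (exp ((L:ℝ) * T) - 1) := by
    intro n; simp [gronwallBound_of_K_ne_0 hL.ne']
  set B := fun n => dist (q n) x * exp ((L:ℝ) * T) + εs n / (L:ℝ) * (exp ((L:ℝ) * T) - 1)
    + εs n with hBdef
  have hd : Tendsto (fun n => dist (q n) x) atTop (𝓝 0) :=
    tendsto_iff_dist_tendsto_zero.1 hq
  have hB : Tendsto B atTop (𝓝 0) := by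
    have := ((hd.mul_const (exp ((L:ℝ) * T))).add
      ((hεst.div_const (L:ℝ)).mul_const (exp ((L:ℝ) * T) - 1))).add hεst
    simpa using this
  suffices hinf : infDist (φ T x) K ≤ 0 from
    (hK.isClosed.mem_iff_infDist_zero hKne).2 (le_antisymm hinf infDist_nonneg)
  have hev : ∀ᶠ n in atTop, B n < 1 := hB (Iio_mem_nhds (by norm_num : (0:ℝ) < 1))
  refine ge_of_tendsto hB ?_
  filter_upwards [hev] with n hn
  have hsmall : gronwallBound (dist (ψ n 0 (q n)) (φ 0 x)) (L:ℝ) (εs n + 0) T < 1 := by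
    rw [(hψ n).1, hφ.1, hgb]
    have h0 := hεs0 n
    have : B n < 1 := hn
    rw [hBdef] at this
    simp only at this
    linarith
  have key := dist_le_of_approx_flow X hK hKne hKR hL hlip (hεs0 n) le_rfl hT
    (f := fun u => ψ n u (q n)) (F := fun u => Y n (ψ n u (q n)))
    (g := fun u => φ u x) (G := fun u => X (φ u x))
    (fun u _ => (hψ n).2.2 (q n) u) (fun u _ => hYX n _)
    (fun u hu => (hqK n u hu).trans (hεs1 n))
    (fun u _ => hφ.2.2 x u) (fun u _ => by simp)
    hsmall
  have key2 : dist (ψ n T (q n)) (φ T x)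
      ≤ gronwallBound (dist (ψ n 0 (q n)) (φ 0 x)) (L:ℝ) (εs n + 0) T := key
  rw [(hψ n).1, hφ.1, hgb] at key2
  have h3 : infDist (φ T x) K ≤ infDist (ψ n T (q n)) K + dist (φ T x) (ψ n T (q n)) :=
    infDist_le_infDist_add_dist
  have h4 := hqK n T ⟨le_rfl.trans hT, le_rfl⟩
  rw [dist_comm] at key2
  show infDist (φ T x) K ≤ dist (q n) x * exp ((L:ℝ) * T) + εs n / (L:ℝ) * (exp ((L:ℝ) * T) - 1) + εs n
  linarith

lemma crset_nonempty_of_invariant_point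
    (X : V → V) {K : Set V} (hK : IsCompact K) (hKne : K.Nonempty)
    {R : ℝ} (hKR : ∀ z ∈ K, ‖z‖ ≤ R) {L : ℝ≥0} (hL : 0 < (L : ℝ))
    (hlip : LipschitzOnWith L X (closedBall 0 (R + 3)))
    {φ : ℝ → V → V} (hφ : IsFlowOf X φ)
    {x : V} (hx : ∀ t : ℝ, φ t x ∈ K) :
    (CRset φ K).Nonempty := by
  have hlipneg : LipschitzOnWith L (fun z => -X z) (closedBall 0 (R+3)) := fun a ha b hb => by
    simpa using hlip ha hb
  have hφ' := hφ.neg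
  have CL : ∀ (z : V) (w : ℕ → V), (∀ k (u : ℝ), φ u (w k) ∈ K) →
      Tendsto w atTop (𝓝 z) → ∀ t : ℝ, Tendsto (fun k => φ t (w k)) atTop (𝓝 (φ t z)) := by
    intro z w hwK hwz t
    rcases le_or_gt 0 t with ht | ht
    · exact tendsto_flow_aux X hK hKne hKR hL hlip hφ ht (fun k u _ => hwK k u) hwz
    · have := tendsto_flow_aux (fun z => -X z) hK hKne hKR hL hlipneg hφ'
        (T := -t) (by linarith) (fun k u _ => hwK k (-u)) hwz
      simpa using this
  have hid : ∀ z : V, φ 0 z = z := hφ.1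
  have hgrp : ∀ s t (z : V), φ (s + t) z = φ s (φ t z) := hφ.2.1
  have hrinv : ∀ t (z : V), φ t (φ (-t) z) = z := by
    intro t z; rw [← hgrp, add_neg_cancel, hid]
  have hlinv : ∀ t (z : V), φ (-t) (φ t z) = z := by
    intro t z; rw [← hgrp, neg_add_cancel, hid]
  have hbij : ∀ t : ℝ, Function.Bijective (φ t) := fun t =>
    ⟨Function.LeftInverse.injective (g := φ (-t)) (hlinv t),
     Function.RightInverse.surjective (g := φ (-t)) (hrinv t)⟩
  set Inv := {z : V | ∀ t : ℝ, φ t z ∈ K} with hInvdef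
  have hInvK : Inv ⊆ K := fun z hz => by have := hz 0; rwa [hid] at this
  have hInvInv : ∀ t : ℝ, φ t '' Inv = Inv := by
    intro t; ext z; constructor
    · rintro ⟨y, hy, rfl⟩ s
      rw [← hgrp]; exact hy _
    · intro hz
      refine ⟨φ (-t) z, fun s => ?_, hrinv t z⟩
      rw [← hgrp]; exact hz _
  have hInvClosed : IsClosed Inv := by
    refine IsSeqClosed.isClosed ?_
    intro w z hw hwz t
    exact hK.isClosed.mem_of_tendsto (CL z w (fun k u => hw k u) hwz t)
      (Filter.Eventually.of_forall fun k => hw k t)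
  set S := {Λ : Set V | Λ.Nonempty ∧ Λ ⊆ K ∧ IsClosed Λ ∧ ∀ t : ℝ, φ t '' Λ = Λ} with hSdef
  have hInvS : Inv ∈ S := ⟨⟨x, hx⟩, hInvK, hInvClosed, hInvInv⟩
  have hzorn : ∀ c ⊆ S, IsChain (· ⊆ ·) c → c.Nonempty →
      ∃ lb ∈ S, ∀ s ∈ c, lb ⊆ s := by
    intro c hcS hchain hcne
    refine ⟨⋂₀ c, ?_, fun s hs => sInter_subset_of_mem hs⟩
    have hdir : Directed (· ⊇ ·) (fun i : c => (i : Set V)) := by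
      intro i j
      rcases eq_or_ne (i : Set V) j with h | h
      · exact ⟨i, Subset.rfl, h.subset⟩
      · rcases hchain i.2 j.2 h with h1 | h1
        · exact ⟨i, le_rfl, h1⟩
        · exact ⟨j, h1, le_rfl⟩
    have hne : (⋂₀ c).Nonempty := by
      rw [sInter_eq_iInter]
      have : Nonempty c := hcne.to_subtype
      exact IsCompact.nonempty_iInter_of_directed_nonempty_isCompact_isClosed _ hdir
        (fun i => (hcS i.2).1) (fun i => hK.of_isClosed_subset (hcS i.2).2.2.1 (hcS i.2).2.1)
        (fun i => (hcS i.2).2.2.1)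
    obtain ⟨s0, hs0⟩ := hcne
    refine ⟨hne, (sInter_subset_of_mem hs0).trans (hcS hs0).2.1,
      isClosed_sInter fun Λ hΛ => (hcS hΛ).2.2.1, fun t => ?_⟩
    rw [sInter_eq_iInter, image_iInter (hbij t)]
    exact iInter_congr fun i => (hcS i.2).2.2.2 t
  obtain ⟨m, hmx, hmmin⟩ := zorn_superset_nonempty S hzorn Inv hInvS
  obtain ⟨hmne, hmK, hmcl, hminv⟩ := hmmin.1
  have hmcpt : IsCompact m := hK.of_isClosed_subset hmcl hmK
  have homega : ∀ a ∈ m, ∀ b ∈ m, ∀ ε > (0:ℝ), ∃ t : ℝ, 1 ≤ t ∧ dist (φ t a) b < ε := by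
    intro a ha b hb ε hε
    have horb : ∀ u : ℝ, φ u a ∈ m := fun u => by
      rw [← hminv u]; exact mem_image_of_mem _ ha
    set Tn := fun n : ℕ => closure ((fun u : ℝ => φ u a) '' Ici (n : ℝ)) with hTndef
    have hTnm : ∀ n, Tn n ⊆ m := fun n =>
      closure_minimal (by rintro _ ⟨u, _, rfl⟩; exact horb u) hmcl
    have hTncl : ∀ n, IsClosed (Tn n) := fun n => isClosed_closure
    have hTnne : ∀ n, (Tn n).Nonempty := fun n =>
      ⟨φ n a, subset_closure ⟨(n : ℝ), mem_Ici.2 le_rfl, rfl⟩⟩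
    have hTnmono : ∀ {j k : ℕ}, j ≤ k → Tn k ⊆ Tn j := fun {j k} hjk =>
      closure_mono (image_mono (Ici_subset_Ici.2 (by exact_mod_cast hjk)))
    set ω := ⋂ n : ℕ, Tn n with hωdef
    have hωne : ω.Nonempty := by
      refine IsCompact.nonempty_iInter_of_directed_nonempty_isCompact_isClosed _ ?_
        hTnne (fun n => hK.of_isClosed_subset (hTncl n) ((hTnm n).trans hmK)) hTncl
      intro i j
      exact ⟨max i j, hTnmono (le_max_left _ _), hTnmono (le_max_right _ _)⟩
    have hωm : ω ⊆ m := (iInter_subset Tn 0).trans (hTnm 0)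
    have hωsub : ∀ t : ℝ, φ t '' ω ⊆ ω := by
      intro t
      rintro _ ⟨z, hz, rfl⟩
      have hchoice : ∀ k : ℕ, ∃ u : ℝ, (k : ℝ) ≤ u ∧ dist z (φ u a) < 1 / (k + 1) := by
        intro k
        have hzk : z ∈ Tn k := mem_iInter.1 hz k
        obtain ⟨y, ⟨u, hu, rfl⟩, hy⟩ := Metric.mem_closure_iff.1 hzk (1 / (k + 1)) (by positivity)
        exact ⟨u, hu, hy⟩
      choose u hu1 hu2 using hchoice
      have hwz : Tendsto (fun k => φ (u k) a) atTop (𝓝 z) := by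
        rw [tendsto_iff_dist_tendsto_zero]
        refine squeeze_zero (g := fun k : ℕ => 1 / ((k:ℝ) + 1)) (fun k => dist_nonneg) (fun k => ?_) ?_
        · rw [dist_comm]; exact (hu2 k).le
        · exact tendsto_one_div_add_atTop_nhds_zero_nat
      have hwK : ∀ k (v : ℝ), φ v (φ (u k) a) ∈ K := fun k v => by
        rw [← hgrp]; exact hmK (horb _)
      have hlim := CL z (fun k => φ (u k) a) hwK hwz t
      refine mem_iInter.2 fun n => ?_
      refine (hTncl n).mem_of_tendsto hlim ?_
      rw [eventually_atTop]
      obtain ⟨N, hN⟩ := exists_nat_ge ((n : ℝ) + |t|)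
      refine ⟨N, fun k hk => ?_⟩
      have hukk : (n : ℝ) + |t| ≤ u k := by
        calc (n:ℝ) + |t| ≤ N := hN
        _ ≤ k := by exact_mod_cast hk
        _ ≤ u k := hu1 k
      have habs : -t ≤ |t| := neg_le_abs t
      exact subset_closure ⟨t + u k, by simp only [mem_Ici]; linarith, hgrp t (u k) a⟩
    have hωinv : ∀ t : ℝ, φ t '' ω = ω := by
      intro t
      refine subset_antisymm (hωsub t) ?_
      have h1 : φ t '' (φ (-t) '' ω) = ω := by
        rw [← image_comp]
        have heq : ∀ z ∈ ω, (φ t ∘ φ (-t)) z = id z := fun z _ => hrinv t z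
        rw [image_congr heq, image_id]
      calc ω = φ t '' (φ (-t) '' ω) := h1.symm
      _ ⊆ φ t '' ω := image_mono (hωsub (-t))
    have hωS : ω ∈ S := ⟨hωne, hωm.trans hmK, isClosed_iInter hTncl, hωinv⟩
    have hmω : m ⊆ ω := hmmin.2 hωS hωm
    have hb1 : b ∈ Tn 1 := mem_iInter.1 (hmω hb) 1
    obtain ⟨y, ⟨u, hu, rfl⟩, hy⟩ := Metric.mem_closure_iff.1 hb1 ε hε
    exact ⟨u, by exact_mod_cast hu, by rwa [dist_comm]⟩
  obtain ⟨a, ha⟩ := hmne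
  refine ⟨a, m, hmK, ⟨hmcpt, hminv, ?_⟩, ha⟩
  intro ε hε p hp q hq
  obtain ⟨t, ht1, ht2⟩ := homega p hp q hq ε hε
  refine ⟨1, fun i => if i = 0 then p else q, fun _ => t, le_rfl, if_pos rfl, if_neg one_ne_zero,
    ?_, ?_⟩
  · intro i _
    by_cases h : i = 0
    · simp only [if_pos h]; exact hp
    · simp only [if_neg h]; exact hq
  · intro i hi
    interval_cases i
    exact ⟨ht1, by simpa using ht2⟩

/-- If `CR(X, K) = ∅`, then for every `C¹` vector field `Y` sufficiently `C¹`-close to `X`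
and some open neighborhood `U` of `K`, one has `CR(Y, closure U) = ∅`. -/
theorem CRset_empty_robust [FiniteDimensional ℝ V]
    (X : V → V) (hX : ContDiff ℝ 1 X) (φ : ℝ → V → V) (hφ : IsFlowOf X φ)
    (K : Set V) (hK : IsCompact K) (hempty : CRset φ K = ∅) :
    ∃ ε > (0 : ℝ), ∃ U : Set V, IsOpen U ∧ K ⊆ U ∧
      ∀ Y : V → V, ContDiff ℝ 1 Y →
        (∀ x, ‖Y x - X x‖ + ‖fderiv ℝ Y x - fderiv ℝ X x‖ < ε) →
        ∀ ψ : ℝ → V → V, IsFlowOf Y ψ → CRset ψ (closure U) = ∅ := by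
  by_contra hcon
  push_neg at hcon
  have H : ∀ n : ℕ, ∃ Y, ContDiff ℝ 1 Y ∧
      (∀ z, ‖Y z - X z‖ + ‖fderiv ℝ Y z - fderiv ℝ X z‖ < 1 / (n + 1)) ∧
      ∃ ψ, IsFlowOf Y ψ ∧ (CRset ψ (closure (thickening (1 / (n + 1)) K))).Nonempty := by
    intro n
    exact hcon (1 / (n + 1)) (by positivity) (thickening (1 / (n + 1)) K)
      isOpen_thickening (self_subset_thickening (by positivity) K)
  choose Y hYc hYd ψ hψ hCR using H
  have H2 : ∀ n : ℕ, ∃ p Λ, Λ ⊆ closure (thickening (1 / (n + 1) : ℝ) K) ∧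
      ChainTransitiveSet (ψ n) Λ ∧ p ∈ Λ := by
    intro n
    obtain ⟨p, hp⟩ := hCR n
    obtain ⟨Λ, h1, h2, h3⟩ := hp
    exact ⟨p, Λ, h1, h2, h3⟩
  choose p Λ hΛsub hΛct hpΛ using H2
  have hKne : K.Nonempty := by
    rcases K.eq_empty_or_nonempty with h | h
    · exfalso
      have := hΛsub 0 (hpΛ 0)
      rw [h, thickening_empty, closure_empty] at this
      exact this
    · exact h
  have hcont : Continuous fun z : V => infDist z K := continuous_infDist_pt K
  have hthick : ∀ n : ℕ, ∀ z ∈ closure (thickening (1 / (n + 1) : ℝ) K),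
      infDist z K ≤ 1 / (n + 1) := by
    intro n
    have hcl : IsClosed {z : V | infDist z K ≤ 1 / (n + 1)} :=
      isClosed_le hcont continuous_const
    refine closure_minimal (fun z hz => ?_) hcl
    exact ((mem_thickening_iff_infDist_lt hKne).1 hz).le
  have htraj : ∀ n (u : ℝ), ψ n u (p n) ∈ Λ n := by
    intro n u
    have h := mem_image_of_mem (ψ n u) (hpΛ n)
    rwa [(hΛct n).2.1 u] at h
  have hqinf : ∀ n (u : ℝ), infDist (ψ n u (p n)) K ≤ 1 / (n + 1) := fun n u =>
    hthick n _ (hΛsub n (htraj n u))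
  obtain ⟨r, hr⟩ := hK.isBounded.subset_closedBall 0
  set R := max r 0 with hRdef
  have hKR : ∀ z ∈ K, ‖z‖ ≤ R := fun z hz => by
    have := hr hz
    rw [mem_closedBall, dist_zero_right] at this
    exact this.trans (le_max_left _ _)
  have hfc : Continuous (fderiv ℝ X) := hX.continuous_fderiv one_ne_zero
  obtain ⟨C, hC⟩ := (isCompact_closedBall (0:V) (R+3)).exists_bound_of_continuousOn
    hfc.continuousOn
  set L : ℝ≥0 := Real.toNNReal C + 1 with hLdef
  have hL : 0 < (L : ℝ) := by
    rw [hLdef]; push_cast; positivity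
  have hlip : LipschitzOnWith L X (closedBall 0 (R+3)) := by
    refine Convex.lipschitzOnWith_of_nnnorm_fderiv_le
      (fun z _ => (hX.differentiable one_ne_zero).differentiableAt) (fun z hz => ?_)
      (convex_closedBall _ _)
    rw [← NNReal.coe_le_coe, coe_nnnorm, hLdef]
    push_cast
    rw [Real.coe_toNNReal']
    have h1 := hC z hz
    have h2 : C ≤ max C 0 := le_max_left _ _
    linarith
  set S1 := {z : V | infDist z K ≤ 1} with hS1def
  have hS1cl : IsClosed S1 := isClosed_le hcont continuous_const
  have hS1sub : S1 ⊆ closedBall 0 (R+1) := by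
    intro z hz
    obtain ⟨y, hyK, hy⟩ := hK.exists_infDist_eq_dist hKne z
    rw [mem_closedBall, dist_zero_right]
    have h1 : dist z y ≤ 1 := by rw [← hy]; exact hz
    calc ‖z‖ = dist z 0 := (dist_zero_right z).symm
    _ ≤ dist z y + dist y 0 := dist_triangle _ _ _
    _ ≤ 1 + R := by rw [dist_zero_right]; exact add_le_add h1 (hKR y hyK)
    _ = R + 1 := by ring
  have hS1cpt : IsCompact S1 := (isCompact_closedBall 0 (R+1)).of_isClosed_subset hS1cl hS1sub
  have hone : ∀ n : ℕ, (1:ℝ) / (n + 1) ≤ 1 := by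
    intro n
    rw [div_le_one (by positivity)]
    have : (0:ℝ) ≤ n := Nat.cast_nonneg n
    linarith
  have hpS1 : ∀ n, p n ∈ S1 := fun n =>
    (hthick n _ (hΛsub n (hpΛ n))).trans (hone n)
  obtain ⟨x, hxS1, σ, hσmono, hσlim⟩ := hS1cpt.tendsto_subseq hpS1
  have hεst : Tendsto (fun k : ℕ => 1 / ((σ k : ℝ) + 1)) atTop (𝓝 0) := by
    refine squeeze_zero (fun k => by positivity) (fun k => ?_)
      tendsto_one_div_add_atTop_nhds_zero_nat
    refine one_div_le_one_div_of_le (by positivity) ?_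
    have := hσmono.id_le k
    have : (k:ℝ) ≤ (σ k : ℝ) := by exact_mod_cast this
    linarith
  have hdistx : Tendsto (fun k => dist x (p (σ k))) atTop (𝓝 0) := by
    have h := tendsto_iff_dist_tendsto_zero.1 hσlim
    simpa [dist_comm] using h
  have hxK : x ∈ K := by
    refine (hK.isClosed.mem_iff_infDist_zero hKne).2 (le_antisymm ?_ infDist_nonneg)
    have hb : Tendsto (fun k => 1 / ((σ k:ℝ)+1) + dist x (p (σ k))) atTop (𝓝 0) := by
      simpa using hεst.add hdistx
    refine ge_of_tendsto hb (Eventually.of_forall fun k => ?_)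
    calc infDist x K ≤ infDist (p (σ k)) K + dist x (p (σ k)) := infDist_le_infDist_add_dist
    _ ≤ 1 / ((σ k:ℝ)+1) + dist x (p (σ k)) := by
        have := hthick (σ k) _ (hΛsub _ (hpΛ _))
        have h2 : ((σ k : ℕ) : ℝ) + 1 = ((σ k : ℝ) + 1) := by push_cast; ring
        linarith [this]
  have hYX : ∀ n (z : V), ‖Y n z - X z‖ ≤ 1 / ((n:ℝ) + 1) := fun n z => by
    have h1 := hYd n z
    have h2 : (0:ℝ) ≤ ‖fderiv ℝ (Y n) z - fderiv ℝ X z‖ := norm_nonneg _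
    linarith
  have hεs1 : ∀ k : ℕ, 1 / ((σ k:ℝ) + 1) ≤ 1 := fun k => hone (σ k)
  have hxInv : ∀ t : ℝ, φ t x ∈ K := by
    intro t
    rcases le_or_gt 0 t with ht | ht
    · exact flow_limit_mem X hK hKne hKR hL hlip hφ (fun k => hψ (σ k))
        (εs := fun k => 1 / ((σ k : ℝ) + 1)) (fun k => by positivity) hεs1 hεst
        (fun k z => hYX (σ k) z) (q := fun k => p (σ k)) hσlim ht
        (fun k u hu => hqinf (σ k) u)
    · have hφ' := hφ.neg
      have hψ' := fun k : ℕ => (hψ (σ k)).neg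
      have hlipneg : LipschitzOnWith L (fun z => -X z) (closedBall 0 (R+3)) :=
        fun a ha b hb => by simpa using hlip ha hb
      have hres := flow_limit_mem (fun z => -X z) hK hKne hKR hL hlipneg hφ'
        (Y := fun k z => -(Y (σ k) z)) (ψ := fun k s z => ψ (σ k) (-s) z) hψ'
        (εs := fun k => 1 / ((σ k : ℝ) + 1)) (fun k => by positivity) hεs1 hεst
        (fun k z => by rw [neg_sub_neg, norm_sub_rev]; exact hYX (σ k) z)
        (q := fun k => p (σ k)) hσlim (T := -t) (by linarith)
        (fun k u hu => hqinf (σ k) (-u))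
      simpa using hres
  have hCRne := crset_nonempty_of_invariant_point X hK hKne hKR hL hlip hφ hxInv
  rw [hempty] at hCRne
  exact Set.not_nonempty_empty hCRne
end
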